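/- arXiv:2404.03370 — 4 statements merged into one kernel-verified Lean document; each statement's English description precedes it below -/
import Mathlib

section
/- Let X and H be real separable Hilbert spaces with X embedded densely and compactly in H, and let T > 0. Then the embedding of L¹(0,T;X) ∩ H¹(0,T;H) into C([0,T];H) is compact: every sequence (u_n) of functions u_n : [0,T] → H that is bounded both in the L¹(0,T;X)-norm and in the H¹(0,T;H)-norm admits a subsequence converging uniformly on [0,T] in the norm of H. -/
open MeasureTheory Filter Topology

lemma tb_of_near {E : Type*} [PseudoMetricSpace E] {A : Set E}
    (h : ∀ ε : ℝ, 0 < ε → ∃ K : Set E, TotallyBounded K ∧ ∀ x ∈ A, ∃ y ∈ K, dist x y ≤ ε) :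
    TotallyBounded A := by
  rw [Metric.totallyBounded_iff]
  intro ε hε
  obtain ⟨K, hK, hnear⟩ := h (ε/3) (by linarith)
  obtain ⟨t, htfin, hcov⟩ := Metric.totallyBounded_iff.mp hK (ε/3) (by linarith)
  refine ⟨t, htfin, fun x hx => ?_⟩
  obtain ⟨y, hyK, hxy⟩ := hnear x hx
  obtain ⟨z, hz, hyz⟩ := Set.mem_iUnion₂.mp (hcov hyK)
  simp only [Set.mem_iUnion₂]
  exact ⟨z, hz, by rw [Metric.mem_ball] at *; calc dist x z ≤ dist x y + dist y z := dist_triangle _ _ _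
    _ < ε := by linarith⟩

/-- **Aubin–Lions–Simon compactness**: with `X ⊂ H` compactly (via a compact, injective,
densely-ranged embedding `ι`), every sequence bounded in `L¹(0,T;X) ∩ H¹(0,T;H)` has a
subsequence converging uniformly on `[0,T]` in the norm of `H`. -/
theorem stmt_0 {X H : Type*}
    [NormedAddCommGroup X] [InnerProductSpace ℝ X] [CompleteSpace X]
    [TopologicalSpace.SeparableSpace X]
    [NormedAddCommGroup H] [InnerProductSpace ℝ H] [CompleteSpace H]
    [TopologicalSpace.SeparableSpace H]
    (ι : X →L[ℝ] H) (hι_inj : Function.Injective ι) (hι_dense : DenseRange ι)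
    (hι_cpt : IsCompactOperator ι)
    (T : ℝ) (hT : 0 < T)
    (u : ℕ → ℝ → X) (u' : ℕ → ℝ → H)
    -- each `u n ∈ L¹(0,T;X)`
    (humeas : ∀ n, AEStronglyMeasurable (u n) (volume.restrict (Set.Ioc 0 T)))
    (huL1X : ∀ n, Integrable (fun t => ‖u n t‖) (volume.restrict (Set.Ioc 0 T)))
    -- each `ι ∘ u n ∈ H¹(0,T;H)`: absolutely continuous with a.e. derivative `u' n ∈ L²(0,T;H)`
    (hac : ∀ n, ∀ t ∈ Set.Icc 0 T, ι (u n t) = ι (u n 0) + ∫ s in (0:ℝ)..t, u' n s)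
    (hu'L2 : ∀ n, MemLp (u' n) 2 (volume.restrict (Set.Ioc 0 T)))
    -- boundedness in `L¹(0,T;X)` and in `H¹(0,T;H)`
    (C : ℝ)
    (hbddL1X : ∀ n, ∫ t in Set.Ioc 0 T, ‖u n t‖ ≤ C)
    (hbddH1 : ∀ n, (∫ t in Set.Ioc 0 T, ‖ι (u n t)‖ ^ 2) +
        (∫ t in Set.Ioc 0 T, ‖u' n t‖ ^ 2) ≤ C) :
    ∃ φ : ℕ → ℕ, StrictMono φ ∧ ∃ v : ℝ → H,
      TendstoUniformlyOn (fun k t => ι (u (φ k) t)) v atTop (Set.Icc 0 T) := by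
  classical
  have hC0 : 0 ≤ C := le_trans (integral_nonneg (fun t => norm_nonneg _)) (hbddL1X 0)
  have hu'sq : ∀ n, ∫ t in Set.Ioc 0 T, ‖u' n t‖ ^ 2 ≤ C := by
    intro n
    have h1 : 0 ≤ ∫ t in Set.Ioc 0 T, ‖ι (u n t)‖ ^ 2 :=
      integral_nonneg (fun t => by positivity)
    linarith [hbddH1 n]
  -- Memℒp on subintervals
  have hMem2 : ∀ n a b, 0 ≤ a → b ≤ T →
      MemLp (u' n) 2 (volume.restrict (Set.Ioc a b)) := by
    intro n a b ha hb
    have h := (hu'L2 n).restrict (Set.Ioc a b)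
    rwa [Measure.restrict_restrict measurableSet_Ioc,
      Set.inter_eq_self_of_subset_left (Set.Ioc_subset_Ioc ha hb)] at h
  have hIntu' : ∀ n a b, 0 ≤ a → b ≤ T → IntegrableOn (u' n) (Set.Ioc a b) volume :=
    fun n a b ha hb => (hMem2 n a b ha hb).integrable one_le_two
  -- integrability of the squared norm on [0,T]
  have hsqInt : ∀ n, IntegrableOn (fun t => ‖u' n t‖ ^ 2) (Set.Ioc 0 T) volume := by
    intro n
    have h := (hu'L2 n).integrable_norm_rpow (by norm_num) (by norm_num)
    simpa [ENNReal.toReal_ofNat, Real.rpow_natCast, IntegrableOn] using h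
  -- Cauchy-Schwarz bound
  have hCS : ∀ n a b, 0 ≤ a → a ≤ b → b ≤ T →
      ∫ t in Set.Ioc a b, ‖u' n t‖ ≤ Real.sqrt C * Real.sqrt (b - a) := by
    intro n a b ha hab hb
    have hpq : Real.HolderConjugate 2 2 := Real.HolderConjugate.two_two
    have hf : MemLp (fun t => ‖u' n t‖) (ENNReal.ofReal 2) (volume.restrict (Set.Ioc a b)) := by
      rw [(by norm_num : ENNReal.ofReal 2 = 2)]; exact (hMem2 n a b ha hb).norm
    have hg : MemLp (fun _ : ℝ => (1:ℝ)) (ENNReal.ofReal 2)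
        (volume.restrict (Set.Ioc a b)) := memLp_const 1
    have h := integral_mul_norm_le_Lp_mul_Lq (E := ℝ) (f := fun t => ‖u' n t‖)
      (g := fun _ : ℝ => (1:ℝ)) hpq hf hg
    simp only [norm_one, mul_one, Real.one_rpow, norm_norm, Real.rpow_two, one_pow] at h
    rw [setIntegral_const (1:ℝ), smul_eq_mul, mul_one, measureReal_def, Real.volume_Ioc,
      ENNReal.toReal_ofReal (by linarith : (0:ℝ) ≤ b - a)] at h
    have h2 : ∫ t in Set.Ioc a b, ‖u' n t‖ ^ 2 ≤ C :=
      le_trans (setIntegral_mono_set (hsqInt n) (Eventually.of_forall fun t => by positivity)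
        (HasSubset.Subset.eventuallyLE (Set.Ioc_subset_Ioc ha hb))) (hu'sq n)
    refine le_trans h ?_
    rw [← Real.sqrt_eq_rpow, ← Real.sqrt_eq_rpow]
    exact mul_le_mul_of_nonneg_right (Real.sqrt_le_sqrt h2) (Real.sqrt_nonneg _)
  -- fundamental theorem of calculus form
  have hdiff : ∀ n a b, 0 ≤ a → a ≤ b → b ≤ T →
      ι (u n b) - ι (u n a) = ∫ t in Set.Ioc a b, u' n t := by
    intro n a b ha hab hb
    have hb0 : (0:ℝ) ≤ b := le_trans ha hab
    have i1 : IntervalIntegrable (u' n) volume 0 b :=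
      (intervalIntegrable_iff_integrableOn_Ioc_of_le hb0).mpr (hIntu' n 0 b le_rfl hb)
    have i2 : IntervalIntegrable (u' n) volume 0 a :=
      (intervalIntegrable_iff_integrableOn_Ioc_of_le ha).mpr
        (hIntu' n 0 a le_rfl (le_trans hab hb))
    rw [hac n b ⟨hb0, hb⟩, hac n a ⟨ha, le_trans hab hb⟩, add_sub_add_left_eq_sub,
      intervalIntegral.integral_interval_sub_left i1 i2, intervalIntegral.integral_of_le hab]
  -- uniform Hölder-1/2 estimate
  have hkey : ∀ n, ∀ s ∈ Set.Icc (0:ℝ) T, ∀ t ∈ Set.Icc (0:ℝ) T,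
      dist (ι (u n t)) (ι (u n s)) ≤ Real.sqrt C * Real.sqrt |t - s| := by
    have key : ∀ n, ∀ s t : ℝ, 0 ≤ s → s ≤ t → t ≤ T →
        dist (ι (u n t)) (ι (u n s)) ≤ Real.sqrt C * Real.sqrt (t - s) := by
      intro n s t hs hst hT'
      rw [dist_eq_norm, hdiff n s t hs hst hT']
      calc ‖∫ r in Set.Ioc s t, u' n r‖ ≤ ∫ r in Set.Ioc s t, ‖u' n r‖ :=
            norm_integral_le_integral_norm _
        _ ≤ Real.sqrt C * Real.sqrt (t - s) := hCS n s t hs hst hT'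
    intro n s hs t ht
    rcases le_total s t with hc | hc
    · rw [abs_of_nonneg (by linarith)]
      exact key n s t hs.1 hc ht.2
    · rw [abs_of_nonpos (by linarith), dist_comm, neg_sub]
      exact key n t s ht.1 hc hs.2
  -- modulus of continuity
  have hmod : ∀ ε : ℝ, 0 < ε → ∃ δ : ℝ, 0 < δ ∧
      ∀ x : ℝ, |x| ≤ δ → Real.sqrt C * Real.sqrt |x| < ε := by
    intro ε hε
    have hq0 : 0 < ε / (Real.sqrt C + 1) := by positivity
    refine ⟨(ε / (Real.sqrt C + 1)) ^ 2 / 4, by positivity, fun x hx => ?_⟩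
    have h1 : Real.sqrt |x| ≤ ε / (Real.sqrt C + 1) / 2 := by
      rw [show (ε / (Real.sqrt C + 1)) ^ 2 / 4 = (ε / (Real.sqrt C + 1) / 2) ^ 2 by ring] at hx
      calc Real.sqrt |x| ≤ Real.sqrt ((ε / (Real.sqrt C + 1) / 2) ^ 2) := Real.sqrt_le_sqrt hx
        _ = ε / (Real.sqrt C + 1) / 2 := Real.sqrt_sq (by positivity)
    have hsC : (0:ℝ) < Real.sqrt C + 1 := by positivity
    calc Real.sqrt C * Real.sqrt |x|
        ≤ (Real.sqrt C + 1) * (ε / (Real.sqrt C + 1) / 2) :=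
          mul_le_mul (by linarith) h1 (Real.sqrt_nonneg _) (by positivity)
      _ = ε / 2 := by field_simp
      _ < ε := by linarith
  -- continuity
  have hcont : ∀ n, ContinuousOn (fun t => ι (u n t)) (Set.Icc (0:ℝ) T) := by
    intro n t ht
    rw [Metric.continuousWithinAt_iff]
    intro ε hε
    obtain ⟨δ, hδ0, hδ⟩ := hmod ε hε
    refine ⟨δ, hδ0, fun s hs hst => ?_⟩
    refine lt_of_le_of_lt (hkey n t ht s hs) (hδ _ ?_)
    rw [Real.dist_eq] at hst
    exact le_of_lt hst
  -- integrability of u in X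
  have hIntu : ∀ n, IntegrableOn (u n) (Set.Ioc 0 T) volume := fun n =>
    Integrable.mono' (huL1X n) (humeas n) (Eventually.of_forall fun t => le_rfl)
  -- the common set of values is totally bounded
  have htb : TotallyBounded {y : H | ∃ n, ∃ t ∈ Set.Icc (0:ℝ) T, ι (u n t) = y} := by
    apply tb_of_near
    intro ε hε
    obtain ⟨δ, hδ0, hδ⟩ := hmod ε hε
    set h : ℝ := min T δ with hh
    have hh0 : 0 < h := lt_min hT hδ0
    have hhT : h ≤ T := min_le_left _ _
    obtain ⟨K, hKcpt, hKsub⟩ :=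
      IsCompactOperator.image_closedBall_subset_compact (𝕜₁ := ℝ)
        (f := (ι : X →ₗ[ℝ] H)) hι_cpt (C / h)
    refine ⟨K, hKcpt.totallyBounded, ?_⟩
    rintro x ⟨n, t, ht, rfl⟩
    set a : ℝ := min t (T - h) with ha'
    have ha0 : 0 ≤ a := le_min ht.1 (by linarith)
    have hahT : a + h ≤ T := by
      have := min_le_right t (T - h); linarith
    have hta : a ≤ t := min_le_left _ _
    have htah : t ≤ a + h := by
      rcases le_total t (T - h) with hc | hc
      · rw [ha', min_eq_left hc]; linarith
      · rw [ha', min_eq_right hc]; linarith [ht.2]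
    have hsub : Set.Ioc a (a + h) ⊆ Set.Ioc 0 T := Set.Ioc_subset_Ioc ha0 hahT
    have hInt : IntegrableOn (u n) (Set.Ioc a (a + h)) volume := (hIntu n).mono_set hsub
    set avg : X := h⁻¹ • ∫ s in Set.Ioc a (a + h), u n s with havg
    have havg_mem : ι avg ∈ K := by
      apply hKsub
      refine ⟨avg, ?_, rfl⟩
      rw [Metric.mem_closedBall, dist_zero_right]
      have hb1 : ‖∫ s in Set.Ioc a (a + h), u n s‖ ≤ C :=
        calc ‖∫ s in Set.Ioc a (a + h), u n s‖ ≤ ∫ s in Set.Ioc a (a + h), ‖u n s‖ :=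
              norm_integral_le_integral_norm _
          _ ≤ ∫ s in Set.Ioc 0 T, ‖u n s‖ :=
              setIntegral_mono_set (huL1X n)
                (Eventually.of_forall fun s => norm_nonneg _)
                (HasSubset.Subset.eventuallyLE hsub)
          _ ≤ C := hbddL1X n
      calc ‖avg‖ = h⁻¹ * ‖∫ s in Set.Ioc a (a + h), u n s‖ := by
            rw [havg, norm_smul, Real.norm_eq_abs, abs_of_pos (by positivity)]
        _ ≤ h⁻¹ * C := by
            exact mul_le_mul_of_nonneg_left hb1 (by positivity)
        _ = C / h := by rw [div_eq_inv_mul]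
    refine ⟨ι avg, havg_mem, ?_⟩
    have hμ : volume (Set.Ioc a (a + h)) = ENNReal.ofReal h := by
      rw [Real.volume_Ioc]; congr 1; ring
    have hconst : ι (u n t) = h⁻¹ • ∫ _ in Set.Ioc a (a + h), ι (u n t) ∂volume := by
      rw [setIntegral_const, measureReal_def, hμ, ENNReal.toReal_ofReal hh0.le, smul_smul,
        inv_mul_cancel₀ (ne_of_gt hh0), one_smul]
    have hcomm : ι avg = h⁻¹ • ∫ s in Set.Ioc a (a + h), ι (u n s) ∂volume := by
      rw [havg, ContinuousLinearMap.map_smul, ContinuousLinearMap.integral_comp_comm ι hInt]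
    have hInt1 : IntegrableOn (fun _ : ℝ => ι (u n t)) (Set.Ioc a (a + h)) volume :=
      integrableOn_const (by rw [hμ]; exact ENNReal.ofReal_ne_top)
    have hInt2 : IntegrableOn (fun s => ι (u n s)) (Set.Ioc a (a + h)) volume :=
      ContinuousLinearMap.integrable_comp ι hInt
    rw [dist_eq_norm, hconst, hcomm, ← smul_sub, ← integral_sub hInt1 hInt2]
    have hbound : ∀ s ∈ Set.Ioc a (a + h), ‖ι (u n t) - ι (u n s)‖ ≤
        Real.sqrt C * Real.sqrt h := by
      intro s hs
      have hsIcc : s ∈ Set.Icc (0:ℝ) T := ⟨le_of_lt (lt_of_le_of_lt ha0 hs.1),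
        le_trans hs.2 hahT⟩
      have h1 : dist (ι (u n t)) (ι (u n s)) ≤ Real.sqrt C * Real.sqrt |t - s| := by
        have := hkey n s hsIcc t ⟨le_trans ha0 hta, le_trans htah hahT⟩
        exact this
      have habs : |t - s| ≤ h := by
        rw [abs_le]; exact ⟨by linarith [hs.2], by linarith [hs.1]⟩
      calc ‖ι (u n t) - ι (u n s)‖ = dist (ι (u n t)) (ι (u n s)) := (dist_eq_norm _ _).symm
        _ ≤ Real.sqrt C * Real.sqrt |t - s| := h1
        _ ≤ Real.sqrt C * Real.sqrt h :=
            mul_le_mul_of_nonneg_left (Real.sqrt_le_sqrt habs) (Real.sqrt_nonneg _)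
    have hnorm : ‖∫ s in Set.Ioc a (a + h), (ι (u n t) - ι (u n s)) ∂volume‖ ≤
        Real.sqrt C * Real.sqrt h * h := by
      have := norm_setIntegral_le_of_norm_le_const (μ := volume) (s := Set.Ioc a (a + h))
        (by rw [hμ]; exact ENNReal.ofReal_lt_top) hbound
      rwa [measureReal_def, hμ, ENNReal.toReal_ofReal hh0.le] at this
    calc ‖h⁻¹ • ∫ s in Set.Ioc a (a + h), (ι (u n t) - ι (u n s)) ∂volume‖
        = h⁻¹ * ‖∫ s in Set.Ioc a (a + h), (ι (u n t) - ι (u n s)) ∂volume‖ := by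
          rw [norm_smul, Real.norm_eq_abs, abs_of_pos (by positivity)]
      _ ≤ h⁻¹ * (Real.sqrt C * Real.sqrt h * h) :=
          mul_le_mul_of_nonneg_left hnorm (by positivity)
      _ = Real.sqrt C * Real.sqrt h := by field_simp
      _ ≤ ε := le_of_lt (by
          have : |h| ≤ δ := by rw [abs_of_pos hh0]; exact min_le_right _ _
          have := hδ h this
          rwa [abs_of_pos hh0] at this)
  -- the family as bounded continuous functions
  let F : ℕ → C(Set.Icc (0:ℝ) T, H) := fun n => ⟨fun x => ι (u n x), (hcont n).restrict⟩
  let Fb : ℕ → BoundedContinuousFunction (Set.Icc (0:ℝ) T) H := fun n => BoundedContinuousFunction.mkOfCompact (F n)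
  have hcpt : IsCompact (closure (Set.range Fb)) := by
    apply BoundedContinuousFunction.arzela_ascoli
      (closure {y : H | ∃ n, ∃ t ∈ Set.Icc (0:ℝ) T, ι (u n t) = y})
      (TotallyBounded.isCompact_of_isClosed htb.closure isClosed_closure)
    · rintro f x ⟨n, rfl⟩
      exact subset_closure ⟨n, x, x.2, rfl⟩
    · intro x
      rw [Metric.equicontinuousAt_iff]
      intro ε hε
      obtain ⟨δ, hδ0, hδ⟩ := hmod ε hε
      refine ⟨δ, hδ0, fun y hy i => ?_⟩
      obtain ⟨f, n, rfl⟩ := i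
      show dist (ι (u n ↑x)) (ι (u n ↑y)) < ε
      have h2 : dist (ι (u n x)) (ι (u n y)) ≤ Real.sqrt C * Real.sqrt |(x:ℝ) - y| :=
        hkey n y y.2 x x.2
      refine lt_of_le_of_lt h2 (hδ _ ?_)
      rw [Subtype.dist_eq, Real.dist_eq] at hy
      rw [abs_sub_comm]
      exact le_of_lt hy
  obtain ⟨g, -, φ, hφ, hconv⟩ :=
    hcpt.tendsto_subseq (x := Fb) (fun n => subset_closure (Set.mem_range_self n))
  have htu : TendstoUniformly (fun k => ⇑(Fb (φ k))) ⇑g atTop :=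
    BoundedContinuousFunction.tendsto_iff_tendstoUniformly.mp hconv
  refine ⟨φ, hφ, fun t => if ht : t ∈ Set.Icc (0:ℝ) T then g ⟨t, ht⟩ else 0, ?_⟩
  rw [tendstoUniformlyOn_iff_tendstoUniformly_comp_coe]
  have e1 : ((fun t => if ht : t ∈ Set.Icc (0:ℝ) T then g ⟨t, ht⟩ else 0) ∘
      ((↑) : Set.Icc (0:ℝ) T → ℝ)) = ⇑g := by
    funext x
    simp only [Function.comp_apply, x.2, dif_pos]
  rw [e1]
  exact htu
end

section
/- Let H be a real Hilbert space and ψ ∈ C¹(H × H; [0,∞)) with ψ(u,·) convex for every u, and such that for every R > 0 there is c_{5,R} > 0 with ‖d₁ψ(u,v)‖_H ≤ c_{5,R}(1 + ‖v‖_H²) for all u, v ∈ H with ‖u‖_H ≤ R. Let T > 0, let μ ∈ L^∞(0,T) be nonnegative, and let u_k → u in C([0,T];H). Then the convex functionals v ↦ ∫₀ᵀ μ(t) ψ(u_k(t), v(t)) dt converge to v ↦ ∫₀ᵀ μ(t) ψ(u(t), v(t)) dt in the sense of Mosco on L²(0,T;H): the liminf inequality holds along every weakly convergent sequence in L²(0,T;H),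 and every v ∈ L²(0,T;H) admits a recovery sequence converging strongly in L²(0,T;H). -/
open MeasureTheory Filter Topology
open scoped ENNReal

set_option linter.unusedSectionVars false
set_option linter.unusedVariables false
set_option maxHeartbeats 1000000

section Helpers
variable {H : Type*} [NormedAddCommGroup H] [InnerProductSpace ℝ H] [CompleteSpace H]


lemma convex_grad_ineq (f : H → ℝ) (hf : ConvexOn ℝ Set.univ f)
    (hd : Differentiable ℝ f) (x y : H) :
    f x + fderiv ℝ f x (y - x) ≤ f y := by
  rcases eq_or_ne x y with rfl | hxy
  · simp
  · set g : ℝ → ℝ := fun s => f (AffineMap.lineMap x y s) with hg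
    have hconv : ConvexOn ℝ Set.univ g := by
      have := hf.comp_affineMap (AffineMap.lineMap x y)
      rw [Set.preimage_univ] at this; exact this
    have hline : HasDerivAt (fun s : ℝ => AffineMap.lineMap x y s) (y - x) 0 := by
      have h := ((hasDerivAt_id (0:ℝ)).smul_const (y - x)).add_const x
      have : (fun s : ℝ => AffineMap.lineMap x y s) = fun s : ℝ => s • (y - x) + x := by
        funext s
        simp [AffineMap.lineMap_apply_module]
        module
      rw [this]
      simpa using h
    have hgd : HasDerivAt g (fderiv ℝ f x (y - x)) 0 := by
      have hx0 : f x = f (AffineMap.lineMap x y (0:ℝ)) := by simp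
      have hfd : HasFDerivAt f (fderiv ℝ f x) (AffineMap.lineMap x y (0:ℝ)) := by
        simpa using (hd x).hasFDerivAt
      exact hfd.comp_hasDerivAt 0 hline
    have := hconv.le_slope_of_hasDerivAt (Set.mem_univ 0) (Set.mem_univ 1) one_pos hgd
    have hs : slope g 0 1 = g 1 - g 0 := by simp [slope_def_field]
    rw [hs] at this
    have h0 : g 0 = f x := by simp [hg]
    have h1 : g 1 = f y := by simp [hg]
    rw [h0, h1] at this
    linarith


lemma psi_lip (ψ : H → H → ℝ) (hψC1 : ContDiff ℝ 1 (fun p : H × H => ψ p.1 p.2))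
    {R c : ℝ} (hc : ∀ u v : H, ‖u‖ ≤ R → ‖fderiv ℝ (fun x => ψ x v) u‖ ≤ c * (1 + ‖v‖ ^ 2))
    {a b : H} (w : H) (ha : ‖a‖ ≤ R) (hb : ‖b‖ ≤ R) :
    |ψ a w - ψ b w| ≤ c * (1 + ‖w‖ ^ 2) * ‖a - b‖ := by
  have hdiff : ∀ x : H, DifferentiableAt ℝ (fun x => ψ x w) x := by
    intro x
    have h1 : DifferentiableAt ℝ (fun p : H × H => ψ p.1 p.2) (x, w) :=
      (hψC1.differentiable one_ne_zero) (x, w)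
    exact h1.comp x (show DifferentiableAt ℝ (fun y : H => (y, w)) x from
      differentiableAt_fun_id.prodMk (differentiableAt_const w))
  have := Convex.norm_image_sub_le_of_norm_fderiv_le
    (f := fun x => ψ x w) (C := c * (1 + ‖w‖ ^ 2)) (s := Metric.closedBall 0 R)
    (fun x _ => hdiff x)
    (fun x hx => hc x w (by simpa using hx))
    (convex_closedBall 0 R) (by simpa using hb) (by simpa using ha)
  simpa [Real.norm_eq_abs] using this


lemma weak_bounded {μ' : Measure ℝ} (vseq : ℕ → ℝ → H) (v : ℝ → H)
    (hvk : ∀ k, MemLp (vseq k) 2 μ') (hv : MemLp v 2 μ')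
    (hweak : ∀ w : ℝ → H, MemLp w 2 μ' →
      Tendsto (fun k => ∫ t, (inner ℝ (vseq k t) (w t) : ℝ) ∂μ') atTop
        (nhds (∫ t, (inner ℝ (v t) (w t) : ℝ) ∂μ'))) :
    ∃ S : ℝ≥0∞, S ≠ ⊤ ∧ ∀ k, ∫⁻ t, (‖vseq k t‖₊ : ℝ≥0∞) ^ 2 ∂μ' ≤ S := by
  set V : ℕ → Lp H 2 μ' := fun k => (hvk k).toLp (vseq k) with hV
  have hptwise : ∀ W : Lp H 2 μ', ∃ C : ℝ, ∀ k, ‖(innerSL ℝ (V k)) W‖ ≤ C := by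
    intro W
    have hWm : MemLp (⇑W) 2 μ' := Lp.memLp W
    have htd : Tendsto (fun k => ∫ t, (inner ℝ (vseq k t) (W t) : ℝ) ∂μ') atTop
        (nhds (∫ t, (inner ℝ (v t) (W t) : ℝ) ∂μ')) := hweak _ hWm
    have heq : ∀ k, (innerSL ℝ (V k)) W = ∫ t, (inner ℝ (vseq k t) (W t) : ℝ) ∂μ' := by
      intro k
      have h2 : (inner ℝ (V k) W : ℝ) = ∫ t, (inner ℝ ((V k) t) (W t) : ℝ) ∂μ' :=
        MeasureTheory.L2.inner_def (V k) W
      have h3 : ∫ t, (inner ℝ ((V k) t) (W t) : ℝ) ∂μ' = ∫ t, (inner ℝ (vseq k t) (W t) : ℝ) ∂μ' := by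
        refine integral_congr_ae ?_
        filter_upwards [(hvk k).coeFn_toLp] with t ht
        rw [hV]; simp only []; rw [ht]
      simpa [innerSL_apply_apply] using h2.trans h3
    have htd2 : Tendsto (fun k => (innerSL ℝ (V k)) W) atTop
        (nhds (∫ t, (inner ℝ (v t) (W t) : ℝ) ∂μ')) := by
      simpa only [heq] using htd
    have hb1 : BddAbove (Set.range fun k => ‖(innerSL ℝ (V k)) W‖) :=
      (htd2.norm).bddAbove_range
    rcases hb1 with ⟨C, hC⟩
    exact ⟨C, fun k => hC (Set.mem_range_self k)⟩
  obtain ⟨C', hC'⟩ := banach_steinhaus hptwise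
  have hVnorm : ∀ k, ‖V k‖ ≤ C' := by
    intro k
    have := hC' k
    rwa [innerSL_apply_norm] at this
  refine ⟨ENNReal.ofReal C' ^ 2, by exact ENNReal.pow_ne_top ENNReal.ofReal_ne_top, fun k => ?_⟩
  have h1 : eLpNorm (vseq k) 2 μ' ≤ ENNReal.ofReal C' := by
    have h2 : eLpNorm (vseq k) 2 μ' = ENNReal.ofReal ‖V k‖ := by
      rw [Lp.norm_def]
      rw [eLpNorm_congr_ae ((hvk k).coeFn_toLp).symm]
      exact (ENNReal.ofReal_toReal ((Lp.memLp (V k)).2.ne)).symm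
    rw [h2]
    exact ENNReal.ofReal_le_ofReal (hVnorm k)
  have h3 : (∫⁻ t, (‖vseq k t‖₊ : ℝ≥0∞) ^ 2 ∂μ') = eLpNorm (vseq k) 2 μ' ^ 2 := by
    show (∫⁻ t, ‖vseq k t‖ₑ ^ 2 ∂μ') = _
    rw [eLpNorm_eq_lintegral_rpow_enorm_toReal (by norm_num) (by norm_num)]
    rw [← ENNReal.rpow_natCast _ 2, ← ENNReal.rpow_mul]
    norm_num [ENNReal.rpow_two]
  rw [h3]
  exact pow_le_pow_left' h1 2

lemma liminf_add_const_enn (F : ℕ → ℝ≥0∞) (c : ℝ≥0∞) :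
    Filter.liminf (fun k => F k + c) atTop = Filter.liminf F atTop + c := by
  have hmono : Monotone (fun x : ℝ≥0∞ => x + c) := fun a b hab => add_le_add_left hab c
  have := hmono.map_liminf_of_continuousAt (F := atTop) F
    (by exact (continuous_id.add continuous_const).continuousAt)
  exact this.symm

lemma limsup_add_const_enn (F : ℕ → ℝ≥0∞) (c : ℝ≥0∞) :
    Filter.limsup (fun k => F k + c) atTop = Filter.limsup F atTop + c := by
  have hmono : Monotone (fun x : ℝ≥0∞ => x + c) := fun a b hab => add_le_add_left hab c
  have := hmono.map_limsup_of_continuousAt (F := atTop) F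
    (by exact (continuous_id.add continuous_const).continuousAt)
  exact this.symm

lemma enn_le_liminf_helper {F G : ℕ → ℝ≥0∞} {P : ℝ≥0∞}
    (hG : Tendsto G atTop (nhds P))
    (h : ∀ ε : ℝ≥0∞, 0 < ε → ε ≠ ⊤ → ∀ᶠ k in atTop, G k ≤ F k + ε) :
    P ≤ Filter.liminf F atTop := by
  refine ENNReal.le_of_forall_pos_le_add fun ε hε _ => ?_
  have h1 := h ε (by exact_mod_cast hε) ENNReal.coe_ne_top
  have h2 : P = Filter.liminf G atTop := hG.liminf_eq.symm
  calc P = Filter.liminf G atTop := h2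
    _ ≤ Filter.liminf (fun k => F k + ε) atTop :=
        liminf_le_liminf (f := (atTop : Filter ℕ)) (u := G)
          (v := fun k => F k + (ε : ℝ≥0∞)) h1
          Filter.isBounded_ge_of_bot Filter.isCobounded_ge_of_top
    _ = Filter.liminf F atTop + ε := liminf_add_const_enn F ε

lemma enn_limsup_eq_helper {F : ℕ → ℝ≥0∞} {P : ℝ≥0∞}
    (h : ∀ ε : ℝ≥0∞, 0 < ε → ε ≠ ⊤ → ∀ᶠ k in atTop, F k ≤ P + ε ∧ P ≤ F k + ε) :
    Filter.limsup F atTop = P := by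
  refine le_antisymm ?_ ?_
  · refine ENNReal.le_of_forall_pos_le_add fun ε hε _ => ?_
    have h1 := h ε (by exact_mod_cast hε) ENNReal.coe_ne_top
    calc Filter.limsup F atTop ≤ Filter.limsup (fun _ => P + (ε : ℝ≥0∞)) atTop :=
          limsup_le_limsup (h1.mono fun k hk => hk.1)
            Filter.isCobounded_le_of_bot Filter.isBounded_le_of_top
      _ = P + ε := limsup_const _
  · refine ENNReal.le_of_forall_pos_le_add fun ε hε _ => ?_
    have h1 := h ε (by exact_mod_cast hε) ENNReal.coe_ne_top
    have s1 : P = Filter.liminf (fun _ : ℕ => P) atTop := (liminf_const P).symm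
    have s2 : Filter.liminf (fun _ : ℕ => P) atTop ≤
        Filter.liminf (fun k => F k + (ε : ℝ≥0∞)) atTop :=
      liminf_le_liminf (f := (atTop : Filter ℕ)) (u := fun _ : ℕ => P)
        (v := fun k => F k + (ε : ℝ≥0∞)) (h1.mono fun k hk => hk.2)
        Filter.isBounded_ge_of_bot Filter.isCobounded_ge_of_top
    have s3 : Filter.liminf (fun k => F k + (ε : ℝ≥0∞)) atTop
        = Filter.liminf F atTop + ε := liminf_add_const_enn F ε
    have s4 : Filter.liminf F atTop ≤ Filter.limsup F atTop :=
      liminf_le_limsup (f := (atTop : Filter ℕ)) (u := F)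
        Filter.isBounded_le_of_top Filter.isBounded_ge_of_bot
    calc P ≤ Filter.liminf F atTop + ε := by rw [s1]; rw [← s3] at *; exact s2
      _ ≤ Filter.limsup F atTop + ε := add_le_add_left s4 ε

lemma ofReal_integral_le {α : Type*} {m : MeasurableSpace α} {μ : Measure α}
    {f : α → ℝ} (hf : Integrable f μ) :
    ENNReal.ofReal (∫ t, f t ∂μ) ≤ ∫⁻ t, ENNReal.ofReal (f t) ∂μ := by
  have h1 : ∫ t, f t ∂μ ≤ ∫ t, max (f t) 0 ∂μ :=
    integral_mono hf (hf.pos_part) (fun t => le_max_left _ _)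
  have h2 : ENNReal.ofReal (∫ t, max (f t) 0 ∂μ) = ∫⁻ t, ENNReal.ofReal (max (f t) 0) ∂μ :=
    ofReal_integral_eq_lintegral_ofReal hf.pos_part (Filter.Eventually.of_forall fun t => le_max_right _ _)
  have h3 : ∀ t, ENNReal.ofReal (max (f t) 0) = ENNReal.ofReal (f t) := fun t => by
    rcases le_total (f t) 0 with h | h
    · simp [max_eq_right h, ENNReal.ofReal_eq_zero.2 h]
    · rw [max_eq_left h]
  calc ENNReal.ofReal (∫ t, f t ∂μ) ≤ ENNReal.ofReal (∫ t, max (f t) 0 ∂μ) :=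
        ENNReal.ofReal_le_ofReal h1
    _ = ∫⁻ t, ENNReal.ofReal (max (f t) 0) ∂μ := h2
    _ = ∫⁻ t, ENNReal.ofReal (f t) ∂μ := lintegral_congr fun t => h3 t

lemma ofReal_one_add_sq {H : Type*} [NormedAddCommGroup H] (x : H) :
    ENNReal.ofReal (1 + ‖x‖ ^ 2) = 1 + (‖x‖₊ : ℝ≥0∞) ^ 2 := by
  rw [ENNReal.ofReal_add zero_le_one (by positivity), ENNReal.ofReal_one,
    ENNReal.ofReal_pow (norm_nonneg x), ofReal_norm_eq_enorm, enorm_eq_nnnorm]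

lemma lint_sq_eq {μ' : Measure ℝ} (f : ℝ → H) :
    (∫⁻ t, (‖f t‖₊ : ℝ≥0∞) ^ 2 ∂μ') = eLpNorm f 2 μ' ^ 2 := by
  show (∫⁻ t, ‖f t‖ₑ ^ 2 ∂μ') = _
  rw [eLpNorm_eq_lintegral_rpow_enorm_toReal (by norm_num) (by norm_num)]
  rw [← ENNReal.rpow_natCast _ 2, ← ENNReal.rpow_mul]
  norm_num [ENNReal.rpow_two]

lemma lint_sq_ne_top {μ' : Measure ℝ} {f : ℝ → H} (hf : MemLp f 2 μ') :
    (∫⁻ t, (‖f t‖₊ : ℝ≥0∞) ^ 2 ∂μ') ≠ ⊤ := by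
  rw [lint_sq_eq]
  exact ENNReal.pow_ne_top hf.2.ne

lemma integrable_inner_of_memL2 {μ' : Measure ℝ} {f g : ℝ → H}
    (hf : MemLp f 2 μ') (hg : MemLp g 2 μ') :
    Integrable (fun t => (inner ℝ (f t) (g t) : ℝ)) μ' := by
  have h := MeasureTheory.L2.integrable_inner (𝕜 := ℝ) (hf.toLp f) (hg.toLp g)
  apply h.congr
  filter_upwards [hf.coeFn_toLp, hg.coeFn_toLp] with t h1 h2
  rw [h1, h2]

lemma exists_delta {a : ℝ} (ha : 0 ≤ a) (SS : ℝ≥0∞) (hSS : SS ≠ ⊤)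
    (ε : ℝ≥0∞) (hε : 0 < ε) (hεt : ε ≠ ⊤) :
    ∃ δ : ℝ, 0 < δ ∧ ENNReal.ofReal (a * δ) * SS ≤ ε := by
  set s := SS.toReal with hs
  set e := ε.toReal with he
  have hs0 : 0 ≤ s := ENNReal.toReal_nonneg
  have he0 : 0 < e := ENNReal.toReal_pos hε.ne' hεt
  have hD : 0 < a * (s + 1) + 1 := by nlinarith
  refine ⟨e / (a * (s + 1) + 1), div_pos he0 hD, ?_⟩
  have hreal : a * (e / (a * (s + 1) + 1)) * s ≤ e := by
    have h1 : a * (e / (a * (s + 1) + 1)) * s = a * s * e / (a * (s + 1) + 1) := by ring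
    rw [h1, div_le_iff₀ hD]
    nlinarith [mul_nonneg (mul_nonneg ha hs0) he0.le, mul_nonneg ha he0.le]
  calc ENNReal.ofReal (a * (e / (a * (s + 1) + 1))) * SS
      = ENNReal.ofReal (a * (e / (a * (s + 1) + 1))) * ENNReal.ofReal s := by
        rw [hs, ENNReal.ofReal_toReal hSS]
    _ = ENNReal.ofReal (a * (e / (a * (s + 1) + 1)) * s) :=
        (ENNReal.ofReal_mul (by positivity)).symm
    _ ≤ ENNReal.ofReal e := ENNReal.ofReal_le_ofReal hreal
    _ = ε := by rw [he, ENNReal.ofReal_toReal hεt]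

end Helpers

/-- Mosco convergence of weighted integral functionals
`v ↦ ∫₀ᵀ μ(t) ψ(u_k(t), v(t)) dt` on `L²(0,T;H)`, when `u_k → u` in `C([0,T];H)`,
for a `C¹` potential `ψ ≥ 0`, convex in its second variable, with the growth bound
`‖d₁ψ(u,v)‖ ≤ c_{5,R}(1+‖v‖²)`, and a nonnegative weight `μ ∈ L^∞(0,T)`. -/
theorem stmt_4 {H : Type*} [NormedAddCommGroup H] [InnerProductSpace ℝ H] [CompleteSpace H]
    (ψ : H → H → ℝ) (hψnn : ∀ u v : H, 0 ≤ ψ u v)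
    (hψC1 : ContDiff ℝ 1 (fun p : H × H => ψ p.1 p.2))
    (hψconv : ∀ u : H, ConvexOn ℝ Set.univ (ψ u))
    (hbound : ∀ R : ℝ, 0 < R → ∃ c : ℝ, 0 < c ∧ ∀ u v : H, ‖u‖ ≤ R →
      ‖fderiv ℝ (fun x => ψ x v) u‖ ≤ c * (1 + ‖v‖ ^ 2))
    (T : ℝ) (hT : 0 < T)
    (μw : ℝ → ℝ) (hμmeas : Measurable μw) (hμnn : ∀ t, 0 ≤ μw t)
    (M : ℝ) (hμbdd : ∀ t, μw t ≤ M)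
    (u : ℕ → ℝ → H) (ulim : ℝ → H)
    (hucont : ∀ k, ContinuousOn (u k) (Set.Icc 0 T))
    (hulimcont : ContinuousOn ulim (Set.Icc 0 T))
    (huconv : TendstoUniformlyOn (fun k t => u k t) ulim atTop (Set.Icc 0 T)) :
    -- (a) liminf inequality along weakly convergent sequences in L²(0,T;H)
    (∀ (vseq : ℕ → ℝ → H) (v : ℝ → H),
      (∀ k, MemLp (vseq k) 2 (volume.restrict (Set.Ioc 0 T))) →
      MemLp v 2 (volume.restrict (Set.Ioc 0 T)) →
      (∀ w : ℝ → H, MemLp w 2 (volume.restrict (Set.Ioc 0 T)) →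
        Tendsto (fun k => ∫ t in Set.Ioc 0 T, (inner ℝ (vseq k t) (w t) : ℝ)) atTop
          (nhds (∫ t in Set.Ioc 0 T, (inner ℝ (v t) (w t) : ℝ)))) →
      (∫⁻ t in Set.Ioc 0 T, ENNReal.ofReal (μw t * ψ (ulim t) (v t))) ≤
        Filter.liminf
          (fun k => ∫⁻ t in Set.Ioc 0 T, ENNReal.ofReal (μw t * ψ (u k t) (vseq k t)))
          atTop) ∧
    -- (b) recovery sequences, converging strongly in L²(0,T;H)
    (∀ v : ℝ → H, MemLp v 2 (volume.restrict (Set.Ioc 0 T)) →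
      ∃ vseq : ℕ → ℝ → H,
        (∀ k, MemLp (vseq k) 2 (volume.restrict (Set.Ioc 0 T))) ∧
        Tendsto (fun k => ∫ t in Set.Ioc 0 T, ‖vseq k t - v t‖ ^ 2) atTop (nhds 0) ∧
        Filter.limsup
            (fun k => ∫⁻ t in Set.Ioc 0 T, ENNReal.ofReal (μw t * ψ (u k t) (vseq k t)))
            atTop =
          ∫⁻ t in Set.Ioc 0 T, ENNReal.ofReal (μw t * ψ (ulim t) (v t))) := by
  set μ' : Measure ℝ := volume.restrict (Set.Ioc 0 T) with hμ'def
  have hμ'univ : μ' Set.univ = ENNReal.ofReal T := by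
    rw [hμ'def, Measure.restrict_apply_univ, Real.volume_Ioc, sub_zero]
  have hμ'fin : IsFiniteMeasure μ' :=
    ⟨by rw [hμ'univ]; exact ENNReal.ofReal_lt_top⟩
  have hM0 : 0 ≤ M := le_trans (hμnn 0) (hμbdd 0)
  -- bound on ulim
  obtain ⟨R0, hR0⟩ := isCompact_Icc.exists_bound_of_continuousOn hulimcont
  set R : ℝ := max R0 0 + 1 with hRdef
  have hRpos : 0 < R := by positivity
  have hulimR : ∀ t ∈ Set.Icc (0:ℝ) T, ‖ulim t‖ ≤ R := fun t ht =>
    le_trans (hR0 t ht) (by rw [hRdef]; nlinarith [le_max_left R0 (0:ℝ)])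
  obtain ⟨c, hc0, hc⟩ := hbound R hRpos
  -- uniform convergence consequences
  have hunif : ∀ δ : ℝ, 0 < δ → ∀ᶠ k in atTop,
      ∀ t ∈ Set.Icc (0:ℝ) T, ‖u k t - ulim t‖ ≤ δ ∧ ‖u k t‖ ≤ R := by
    intro δ hδ
    have h1 := (Metric.tendstoUniformlyOn_iff.mp huconv) (min δ 1) (lt_min hδ one_pos)
    filter_upwards [h1] with k hk t ht
    have h2 : dist (u k t) (ulim t) < min δ 1 := by
      rw [dist_comm]; exact hk t ht
    have h3 : ‖u k t - ulim t‖ < min δ 1 := by rwa [← dist_eq_norm]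
    constructor
    · exact h3.le.trans (min_le_left _ _)
    · calc ‖u k t‖ ≤ ‖ulim t‖ + ‖u k t - ulim t‖ := by
            have := norm_add_le (ulim t) (u k t - ulim t); simpa using this
        _ ≤ max R0 0 + 1 := add_le_add ((hR0 t ht).trans (le_max_left _ _))
            (h3.le.trans (min_le_right _ _))
        _ = R := hRdef.symm
  -- the Lipschitz-in-u bound, specialized
  have hlip : ∀ (a b w : H), ‖a‖ ≤ R → ‖b‖ ≤ R →
      ψ a w ≤ ψ b w + c * (1 + ‖w‖ ^ 2) * ‖a - b‖ := by
    intro a b w ha hb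
    have := psi_lip ψ hψC1 (fun u v hu => hc u v hu) w ha hb
    have h2 := (abs_le.mp this).2
    linarith
  -- measurability of basic integrands
  have hulm : AEStronglyMeasurable ulim μ' :=
    (hulimcont.mono Set.Ioc_subset_Icc_self).aestronglyMeasurable measurableSet_Ioc
  have hukm : ∀ k, AEStronglyMeasurable (u k) μ' := fun k =>
    ((hucont k).mono Set.Ioc_subset_Icc_self).aestronglyMeasurable measurableSet_Ioc
  have hmb : ∀ (g f : ℝ → H), AEStronglyMeasurable g μ' → AEStronglyMeasurable f μ' →
      AEMeasurable (fun t => ENNReal.ofReal (μw t * ψ (g t) (f t))) μ' := by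
    intro g f hg hf
    have h1 : AEStronglyMeasurable (fun t => ψ (g t) (f t)) μ' :=
      hψC1.continuous.comp_aestronglyMeasurable (hg.prodMk hf)
    exact ENNReal.measurable_ofReal.comp_aemeasurable
      (hμmeas.aemeasurable.mul h1.aemeasurable)
  constructor
  · -- part (a)
    intro vseq v hvk hv hweak
    -- measurable representative of v
    set v' : ℝ → H := hv.1.mk v with hv'def
    have hv'sm : StronglyMeasurable v' := hv.1.stronglyMeasurable_mk
    have hvv' : v =ᵐ[μ'] v' := hv.1.ae_eq_mk
    have hv' : MemLp v' 2 μ' := hv.ae_eq hvv'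
    -- uniform L² bound on vseq
    obtain ⟨S, hSne, hS⟩ := weak_bounded vseq v hvk hv hweak
    set SS : ℝ≥0∞ := μ' Set.univ + S with hSSdef
    have hSSne : SS ≠ ⊤ := by
      rw [hSSdef, hμ'univ]
      exact ENNReal.add_ne_top.2 ⟨ENNReal.ofReal_ne_top, hSne⟩
    have hSSk : ∀ k, (∫⁻ t, ENNReal.ofReal (1 + ‖vseq k t‖ ^ 2) ∂μ') ≤ SS := by
      intro k
      have h1 : (∫⁻ t, ENNReal.ofReal (1 + ‖vseq k t‖ ^ 2) ∂μ')
          = ∫⁻ t, (1 + (‖vseq k t‖₊ : ℝ≥0∞) ^ 2) ∂μ' :=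
        lintegral_congr fun t => ofReal_one_add_sq (vseq k t)
      rw [h1, lintegral_add_left measurable_const, lintegral_const, one_mul]
      exact add_le_add le_rfl (hS k)
    -- partial derivative in the second variable, and its gradient
    have hψdiff : Differentiable ℝ (fun p : H × H => ψ p.1 p.2) :=
      hψC1.differentiable one_ne_zero
    set L : H →L[ℝ] H × H := ContinuousLinearMap.inr ℝ H H with hLdef
    have hpartial : ∀ a b : H, HasFDerivAt (fun y => ψ a y)
        ((fderiv ℝ (fun p : H × H => ψ p.1 p.2) (a, b)).comp L) b := by
      intro a b
      have h1 : HasFDerivAt (fun y : H => ((a, y) : H × H)) L b := by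
        have h2 : L = ((0 : H →L[ℝ] H).prod (ContinuousLinearMap.id ℝ H)) := by
          ext y <;> simp [hLdef]
        rw [h2]
        exact (hasFDerivAt_const a b).prodMk (hasFDerivAt_id b)
      exact ((hψdiff (a, b)).hasFDerivAt).comp b h1
    set Dψ : H → H → (H →L[ℝ] ℝ) :=
      fun a b => (fderiv ℝ (fun p : H × H => ψ p.1 p.2) (a, b)).comp L with hDdef
    set Gψ : H → H → H :=
      fun a b => (InnerProductSpace.toDual ℝ H).symm (Dψ a b) with hGdef
    have hGinner : ∀ a b y : H, (inner ℝ (Gψ a b) y : ℝ) = Dψ a b y := fun a b y =>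
      InnerProductSpace.toDual_symm_apply
    have hGconv : ∀ a b y : H, ψ a b + (inner ℝ (Gψ a b) (y - b) : ℝ) ≤ ψ a y := by
      intro a b y
      have hd2 : Differentiable ℝ (fun y => ψ a y) := fun x =>
        (hpartial a x).differentiableAt
      have h1 := convex_grad_ineq (fun y => ψ a y) (hψconv a) hd2 b y
      rw [(hpartial a b).fderiv] at h1
      rw [hGinner a b (y - b)]
      exact h1
    have hGcont : Continuous (fun p : H × H => Gψ p.1 p.2) := by
      have h1 : Continuous (fun p : H × H => fderiv ℝ (fun p : H × H => ψ p.1 p.2) p) :=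
        hψC1.continuous_fderiv one_ne_zero
      have h2 : Continuous (fun p : H × H => Dψ p.1 p.2) := by
        have h3 : (fun p : H × H => Dψ p.1 p.2)
            = fun p : H × H => (((ContinuousLinearMap.compL ℝ H (H × H) ℝ).flip L)
                (fderiv ℝ (fun p : H × H => ψ p.1 p.2) p)) := by
          funext p
          rfl
        rw [h3]
        exact (((ContinuousLinearMap.compL ℝ H (H × H) ℝ).flip L).continuous).comp h1
      exact (LinearIsometryEquiv.continuous _).comp h2
    -- measurable versions of t ↦ ψ(ulim t, v' t) and its gradient
    have hΓm : AEStronglyMeasurable (fun t => Gψ (ulim t) (v' t)) μ' :=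
      hGcont.comp_aestronglyMeasurable (hulm.prodMk hv'sm.aestronglyMeasurable)
    set Γ : ℝ → H := hΓm.mk _ with hΓdef
    have hΓsm : StronglyMeasurable Γ := hΓm.stronglyMeasurable_mk
    have hΓeq : (fun t => Gψ (ulim t) (v' t)) =ᵐ[μ'] Γ := hΓm.ae_eq_mk
    have hΦm : AEStronglyMeasurable (fun t => ψ (ulim t) (v' t)) μ' :=
      hψC1.continuous.comp_aestronglyMeasurable (hulm.prodMk hv'sm.aestronglyMeasurable)
    set Φ : ℝ → ℝ := hΦm.mk _ with hΦdef
    have hΦsm : StronglyMeasurable Φ := hΦm.stronglyMeasurable_mk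
    have hΦeq : (fun t => ψ (ulim t) (v' t)) =ᵐ[μ'] Φ := hΦm.ae_eq_mk
    -- truncation sets
    set A : ℕ → Set ℝ := fun n => {t | ‖Γ t‖ ≤ (n : ℝ)} ∩ {t | Φ t ≤ (n : ℝ)} with hAdef
    have hAmeas : ∀ n, MeasurableSet (A n) := fun n =>
      (measurableSet_le hΓsm.norm.measurable measurable_const).inter
        (measurableSet_le hΦsm.measurable measurable_const)
    have hAmono : Monotone A := by
      intro n m hnm t ht
      have h1 : (n : ℝ) ≤ m := Nat.cast_le.2 hnm
      exact ⟨ht.1.trans h1, ht.2.trans h1⟩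
    have hAcover : ∀ t, ∃ n, t ∈ A n := by
      intro t
      obtain ⟨n, hn⟩ := exists_nat_ge (max ‖Γ t‖ (Φ t))
      exact ⟨n, (le_max_left _ _).trans hn, (le_max_right _ _).trans hn⟩
    -- the target integrand (measurable version)
    set targetf : ℝ → ℝ≥0∞ := fun t => ENNReal.ofReal (μw t * Φ t) with htfdef
    have htfmeas : Measurable targetf :=
      ENNReal.measurable_ofReal.comp (hμmeas.mul hΦsm.measurable)
    have htarget_eq : (∫⁻ t, ENNReal.ofReal (μw t * ψ (ulim t) (v t)) ∂μ')
        = ∫⁻ t, targetf t ∂μ' := by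
      refine lintegral_congr_ae ?_
      filter_upwards [hvv', hΦeq] with t h1 h2
      rw [htfdef]
      simp only []
      rw [h1, h2]
    -- monotone convergence over the truncation sets
    have hsup : (∫⁻ t, targetf t ∂μ')
        = ⨆ n, ∫⁻ t, (A n).indicator targetf t ∂μ' := by
      have hpt : ∀ t, (⨆ n, (A n).indicator targetf t) = targetf t := by
        intro t
        refine le_antisymm (iSup_le fun n => Set.indicator_le_self _ _ t) ?_
        obtain ⟨n, hn⟩ := hAcover t
        have : (A n).indicator targetf t = targetf t := Set.indicator_of_mem hn _
        exact this ▸ le_iSup (fun n => (A n).indicator targetf t) n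
      calc (∫⁻ t, targetf t ∂μ') = ∫⁻ t, (⨆ n, (A n).indicator targetf t) ∂μ' :=
            lintegral_congr fun t => (hpt t).symm
        _ = ⨆ n, ∫⁻ t, (A n).indicator targetf t ∂μ' := by
            refine lintegral_iSup' (fun n => (htfmeas.indicator (hAmeas n)).aemeasurable) ?_
            refine Filter.Eventually.of_forall fun t => ?_
            intro n m hnm
            exact Set.indicator_le_indicator_of_subset (hAmono hnm) (fun s => zero_le) t
      -- end hsup
    rw [htarget_eq, hsup]
    refine iSup_le fun n => ?_
    -- per-n argument
    set wn : ℝ → H := (A n).indicator (fun s => μw s • Γ s) with hwndef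
    have hwn_sm : StronglyMeasurable wn :=
      ((hμmeas.stronglyMeasurable.smul hΓsm).indicator (hAmeas n))
    have hwn_bdd : ∀ t, ‖wn t‖ ≤ M * n := by
      intro t
      rw [hwndef]
      by_cases ht : t ∈ A n
      · rw [Set.indicator_of_mem ht]
        rw [norm_smul, Real.norm_eq_abs, abs_of_nonneg (hμnn t)]
        exact mul_le_mul (hμbdd t) ht.1 (norm_nonneg _) hM0
      · rw [Set.indicator_of_notMem ht]
        simp only [norm_zero]
        positivity
    have hwn_mem : MemLp wn 2 μ' :=
      MemLp.of_bound hwn_sm.aestronglyMeasurable (M * n)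
        (Filter.Eventually.of_forall hwn_bdd)
    -- the base function and its integral
    set base : ℝ → ℝ := (A n).indicator (fun s => μw s * Φ s) with hbasedef
    have hbase_sm : StronglyMeasurable base :=
      (hμmeas.stronglyMeasurable.mul hΦsm).indicator (hAmeas n)
    have hΦnn : ∀ᵐ t ∂μ', 0 ≤ Φ t := by
      filter_upwards [hΦeq] with t ht
      rw [← ht]; exact hψnn _ _
    have hbase_bdd : ∀ᵐ t ∂μ', ‖base t‖ ≤ M * n := by
      filter_upwards [hΦnn] with t hΦt
      rw [hbasedef]
      by_cases ht : t ∈ A n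
      · rw [Set.indicator_of_mem ht, Real.norm_eq_abs,
          abs_of_nonneg (mul_nonneg (hμnn t) hΦt)]
        exact mul_le_mul (hμbdd t) ht.2 hΦt hM0
      · rw [Set.indicator_of_notMem ht]
        simp only [norm_zero]
        positivity
    have hbase_int : Integrable base μ' := by
      rw [← memLp_one_iff_integrable]
      exact MemLp.of_bound hbase_sm.aestronglyMeasurable (M * n) hbase_bdd
    have hbase_nn : ∀ᵐ t ∂μ', 0 ≤ base t := by
      filter_upwards [hΦnn] with t hΦt
      rw [hbasedef]
      by_cases ht : t ∈ A n
      · rw [Set.indicator_of_mem ht]; exact mul_nonneg (hμnn t) hΦt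
      · rw [Set.indicator_of_notMem ht]
    set Pn : ℝ := ∫ t, base t ∂μ' with hPndef
    have hPn_lint : (∫⁻ t, (A n).indicator targetf t ∂μ') = ENNReal.ofReal Pn := by
      rw [hPndef, ofReal_integral_eq_lintegral_ofReal hbase_int hbase_nn]
      refine lintegral_congr fun t => ?_
      rw [hbasedef, htfdef]
      by_cases ht : t ∈ A n
      · rw [Set.indicator_of_mem ht, Set.indicator_of_mem ht]
      · rw [Set.indicator_of_notMem ht, Set.indicator_of_notMem ht,
          ENNReal.ofReal_zero]
    rw [hPn_lint]
    -- the approximating sequence of real integrals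
    set hk : ℕ → ℝ → ℝ :=
      fun k t => base t + (inner ℝ (vseq k t - v' t) (wn t) : ℝ) with hhkdef
    have hinner_int : ∀ g : ℝ → H, MemLp g 2 μ' →
        Integrable (fun t => (inner ℝ (g t) (wn t) : ℝ)) μ' := fun g hg =>
      integrable_inner_of_memL2 hg hwn_mem
    have hhk_int : ∀ k, Integrable (hk k) μ' := fun k =>
      hbase_int.add (hinner_int _ ((hvk k).sub hv'))
    have htend : Tendsto (fun k => ∫ t, hk k t ∂μ') atTop (nhds Pn) := by
      have heq : ∀ k, (∫ t, hk k t ∂μ')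
          = Pn + ((∫ t, (inner ℝ (vseq k t) (wn t) : ℝ) ∂μ')
              - ∫ t, (inner ℝ (v' t) (wn t) : ℝ) ∂μ') := by
        intro k
        have hrfl : (∫ t, hk k t ∂μ')
            = ∫ t, (base t + (inner ℝ (vseq k t - v' t) (wn t) : ℝ)) ∂μ' := rfl
        have hsub : Integrable (fun t => (inner ℝ (vseq k t - v' t) (wn t) : ℝ)) μ' := by
          have := hinner_int _ ((hvk k).sub hv')
          simpa [Pi.sub_apply] using this
        rw [hrfl, integral_add hbase_int hsub]
        congr 1
        have h1 : (fun t => (inner ℝ (vseq k t - v' t) (wn t) : ℝ))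
            = fun t => (inner ℝ (vseq k t) (wn t) : ℝ) - (inner ℝ (v' t) (wn t) : ℝ) := by
          funext t; rw [inner_sub_left]
        rw [h1, integral_sub (hinner_int _ (hvk k)) (hinner_int _ hv')]
      have h2 : (∫ t, (inner ℝ (v t) (wn t) : ℝ) ∂μ')
          = ∫ t, (inner ℝ (v' t) (wn t) : ℝ) ∂μ' := by
        refine integral_congr_ae ?_
        filter_upwards [hvv'] with t ht
        rw [ht]
      have h3 : Tendsto (fun k => ∫ t, (inner ℝ (vseq k t) (wn t) : ℝ) ∂μ') atTop
          (nhds (∫ t, (inner ℝ (v' t) (wn t) : ℝ) ∂μ')) := by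
        rw [← h2]
        exact hweak wn hwn_mem
      have h4 : Tendsto (fun k => (∫ t, (inner ℝ (vseq k t) (wn t) : ℝ) ∂μ')
          - ∫ t, (inner ℝ (v' t) (wn t) : ℝ) ∂μ') atTop (nhds 0) := by
        have := h3.sub (tendsto_const_nhds
          (x := ∫ t, (inner ℝ (v' t) (wn t) : ℝ) ∂μ') (f := atTop))
        simpa using this
      have h5 := (tendsto_const_nhds (x := Pn) (f := (atTop : Filter ℕ))).add h4
      rw [add_zero] at h5
      exact h5.congr fun k => (heq k).symm
    have hG : Tendsto (fun k => ENNReal.ofReal (∫ t, hk k t ∂μ')) atTop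
        (nhds (ENNReal.ofReal Pn)) :=
      (ENNReal.continuous_ofReal.tendsto Pn).comp htend
    -- eventual inequality
    refine enn_le_liminf_helper hG ?_
    intro ε hε hεt
    obtain ⟨δ, hδ0, hδ⟩ := exists_delta (mul_nonneg hM0 hc0.le) SS hSSne ε hε hεt
    filter_upwards [hunif δ hδ0] with k hku
    -- pointwise a.e. inequality
    have hpt : ∀ᵐ t ∂μ', ENNReal.ofReal (hk k t)
        ≤ ENNReal.ofReal (μw t * ψ (u k t) (vseq k t))
          + ENNReal.ofReal (M * c * δ * (1 + ‖vseq k t‖ ^ 2)) := by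
      filter_upwards [ae_restrict_mem measurableSet_Ioc, hΓeq, hΦeq] with t htIoc hΓt hΦt
      have htIcc : t ∈ Set.Icc (0:ℝ) T := Set.Ioc_subset_Icc_self htIoc
      obtain ⟨hd, hn⟩ := hku t htIcc
      have hreal : hk k t ≤ μw t * ψ (u k t) (vseq k t)
          + M * c * δ * (1 + ‖vseq k t‖ ^ 2) := by
        rw [hhkdef]
        simp only []
        by_cases ht : t ∈ A n
        · rw [hbasedef, hwndef, Set.indicator_of_mem ht, Set.indicator_of_mem ht]
          have hin : (inner ℝ (vseq k t - v' t) (μw t • Γ t) : ℝ)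
              = μw t * (inner ℝ (Γ t) (vseq k t - v' t) : ℝ) := by
            rw [real_inner_smul_right, real_inner_comm]
          rw [hin]
          have h6 : μw t * Φ t + μw t * (inner ℝ (Γ t) (vseq k t - v' t) : ℝ)
              = μw t * (ψ (ulim t) (v' t)
                + (inner ℝ (Gψ (ulim t) (v' t)) (vseq k t - v' t) : ℝ)) := by
            rw [← hΦt, ← hΓt]; ring
          rw [h6]
          have h7 : μw t * (ψ (ulim t) (v' t)
                + (inner ℝ (Gψ (ulim t) (v' t)) (vseq k t - v' t) : ℝ))
              ≤ μw t * ψ (ulim t) (vseq k t) :=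
            mul_le_mul_of_nonneg_left (hGconv (ulim t) (v' t) (vseq k t)) (hμnn t)
          have h8 : ψ (ulim t) (vseq k t) ≤ ψ (u k t) (vseq k t)
              + c * (1 + ‖vseq k t‖ ^ 2) * δ := by
            have h9 := hlip (ulim t) (u k t) (vseq k t) (hulimR t htIcc) hn
            rw [norm_sub_rev] at h9
            have h10 : c * (1 + ‖vseq k t‖ ^ 2) * ‖u k t - ulim t‖
                ≤ c * (1 + ‖vseq k t‖ ^ 2) * δ :=
              mul_le_mul_of_nonneg_left hd (by positivity)
            linarith
          have h11 : μw t * ψ (ulim t) (vseq k t)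
              ≤ μw t * ψ (u k t) (vseq k t) + M * c * δ * (1 + ‖vseq k t‖ ^ 2) := by
            have h12 := mul_le_mul_of_nonneg_left h8 (hμnn t)
            have h13 : μw t * (c * (1 + ‖vseq k t‖ ^ 2) * δ)
                ≤ M * (c * (1 + ‖vseq k t‖ ^ 2) * δ) :=
              mul_le_mul_of_nonneg_right (hμbdd t) (by positivity)
            nlinarith [mul_le_mul_of_nonneg_left h8 (hμnn t)]
          linarith
        · rw [hbasedef, hwndef, Set.indicator_of_notMem ht, Set.indicator_of_notMem ht]
          rw [inner_zero_right]
          have : (0:ℝ) ≤ μw t * ψ (u k t) (vseq k t) :=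
            mul_nonneg (hμnn t) (hψnn _ _)
          have h14 : (0:ℝ) ≤ M * c * δ * (1 + ‖vseq k t‖ ^ 2) := by positivity
          linarith
      calc ENNReal.ofReal (hk k t)
          ≤ ENNReal.ofReal (μw t * ψ (u k t) (vseq k t)
              + M * c * δ * (1 + ‖vseq k t‖ ^ 2)) := ENNReal.ofReal_le_ofReal hreal
        _ ≤ _ := ENNReal.ofReal_add_le
    -- integrate
    have hvsm : AEMeasurable (fun t => ENNReal.ofReal (1 + ‖vseq k t‖ ^ 2)) μ' :=
      ENNReal.measurable_ofReal.comp_aemeasurable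
        (aemeasurable_const.add (((hvk k).1.norm.aemeasurable).pow_const 2))
    calc ENNReal.ofReal (∫ t, hk k t ∂μ')
        ≤ ∫⁻ t, ENNReal.ofReal (hk k t) ∂μ' := ofReal_integral_le (hhk_int k)
      _ ≤ ∫⁻ t, (ENNReal.ofReal (μw t * ψ (u k t) (vseq k t))
            + ENNReal.ofReal (M * c * δ * (1 + ‖vseq k t‖ ^ 2))) ∂μ' :=
          lintegral_mono_ae hpt
      _ = (∫⁻ t, ENNReal.ofReal (μw t * ψ (u k t) (vseq k t)) ∂μ')
            + ∫⁻ t, ENNReal.ofReal (M * c * δ * (1 + ‖vseq k t‖ ^ 2)) ∂μ' :=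
          lintegral_add_left' (hmb (u k) (vseq k) (hukm k) (hvk k).1) _
      _ ≤ (∫⁻ t, ENNReal.ofReal (μw t * ψ (u k t) (vseq k t)) ∂μ') + ε := by
          refine add_le_add_right ?_ _
          have h15 : (∫⁻ t, ENNReal.ofReal (M * c * δ * (1 + ‖vseq k t‖ ^ 2)) ∂μ')
              = ENNReal.ofReal (M * c * δ) * ∫⁻ t, ENNReal.ofReal (1 + ‖vseq k t‖ ^ 2) ∂μ' := by
            rw [← lintegral_const_mul'' _ hvsm]
            refine lintegral_congr fun t => ?_
            rw [← ENNReal.ofReal_mul (by positivity)]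
          rw [h15]
          calc ENNReal.ofReal (M * c * δ) * (∫⁻ t, ENNReal.ofReal (1 + ‖vseq k t‖ ^ 2) ∂μ')
              ≤ ENNReal.ofReal (M * c * δ) * SS :=
                mul_le_mul_right (hSSk k) _
            _ ≤ ε := hδ

  · -- part (b)
    intro v hv
    refine ⟨fun _ => v, fun _ => hv, by simpa using (tendsto_const_nhds), ?_⟩
    have hSv : (∫⁻ t, ENNReal.ofReal (1 + ‖v t‖ ^ 2) ∂μ') ≠ ⊤ := by
      have h1 : (∫⁻ t, ENNReal.ofReal (1 + ‖v t‖ ^ 2) ∂μ')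
          = ∫⁻ t, (1 + (‖v t‖₊ : ℝ≥0∞) ^ 2) ∂μ' :=
        lintegral_congr fun t => ofReal_one_add_sq (v t)
      rw [h1, lintegral_add_left measurable_const, lintegral_const, one_mul]
      exact ENNReal.add_ne_top.2 ⟨(hμ'univ ▸ ENNReal.ofReal_ne_top), lint_sq_ne_top hv⟩
    have hvaem : AEMeasurable (fun t => ENNReal.ofReal (1 + ‖v t‖ ^ 2)) μ' :=
      ENNReal.measurable_ofReal.comp_aemeasurable
        (aemeasurable_const.add ((hv.1.norm.aemeasurable).pow_const 2))
    apply enn_limsup_eq_helper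
    intro ε hε hεt
    obtain ⟨δ, hδ0, hδ⟩ := exists_delta (mul_nonneg hM0 hc0.le) _ hSv ε hε hεt
    filter_upwards [hunif δ hδ0] with k hk
    -- a.e. two-sided bound
    have hpt : ∀ᵐ t ∂μ', |μw t * ψ (u k t) (v t) - μw t * ψ (ulim t) (v t)|
        ≤ M * c * δ * (1 + ‖v t‖ ^ 2) := by
      filter_upwards [ae_restrict_mem measurableSet_Ioc] with t ht
      have htIcc : t ∈ Set.Icc (0:ℝ) T := Set.Ioc_subset_Icc_self ht
      obtain ⟨hd, hn⟩ := hk t htIcc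
      have h1 := hlip (u k t) (ulim t) (v t) hn (hulimR t htIcc)
      have h2 := hlip (ulim t) (u k t) (v t) (hulimR t htIcc) hn
      rw [norm_sub_rev (ulim t)] at h2
      have h3 : |ψ (u k t) (v t) - ψ (ulim t) (v t)| ≤ c * (1 + ‖v t‖ ^ 2) * δ := by
        rw [abs_le]
        have hnn : 0 ≤ c * (1 + ‖v t‖ ^ 2) := by positivity
        constructor <;> nlinarith [mul_le_mul_of_nonneg_left hd hnn]
      have h4 : |μw t * ψ (u k t) (v t) - μw t * ψ (ulim t) (v t)|
          = μw t * |ψ (u k t) (v t) - ψ (ulim t) (v t)| := by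
        rw [← mul_sub, abs_mul, abs_of_nonneg (hμnn t)]
      rw [h4]
      calc μw t * |ψ (u k t) (v t) - ψ (ulim t) (v t)|
          ≤ M * (c * (1 + ‖v t‖ ^ 2) * δ) := by
            apply mul_le_mul (hμbdd t) h3 (abs_nonneg _) hM0
        _ = M * c * δ * (1 + ‖v t‖ ^ 2) := by ring
    -- generic one-sided lintegral bound
    have key : ∀ (a b : ℝ → H), AEStronglyMeasurable a μ' → AEStronglyMeasurable b μ' →
        (∀ᵐ t ∂μ', μw t * ψ (a t) (v t) ≤ μw t * ψ (b t) (v t) + M * c * δ * (1 + ‖v t‖ ^ 2)) →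
        (∫⁻ t, ENNReal.ofReal (μw t * ψ (a t) (v t)) ∂μ')
          ≤ (∫⁻ t, ENNReal.ofReal (μw t * ψ (b t) (v t)) ∂μ') + ε := by
      intro a b ham hbm hab
      have h1 : (∫⁻ t, ENNReal.ofReal (μw t * ψ (a t) (v t)) ∂μ')
          ≤ ∫⁻ t, (ENNReal.ofReal (μw t * ψ (b t) (v t))
              + ENNReal.ofReal (M * c * δ * (1 + ‖v t‖ ^ 2))) ∂μ' := by
        apply lintegral_mono_ae
        filter_upwards [hab] with t h
        exact le_trans (ENNReal.ofReal_le_ofReal h) (ENNReal.ofReal_add_le)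
      have h2 : (∫⁻ t, (ENNReal.ofReal (μw t * ψ (b t) (v t))
              + ENNReal.ofReal (M * c * δ * (1 + ‖v t‖ ^ 2))) ∂μ')
          = (∫⁻ t, ENNReal.ofReal (μw t * ψ (b t) (v t)) ∂μ')
              + ∫⁻ t, ENNReal.ofReal (M * c * δ * (1 + ‖v t‖ ^ 2)) ∂μ' :=
        lintegral_add_left' (hmb b v hbm hv.1) _
      have h3 : (∫⁻ t, ENNReal.ofReal (M * c * δ * (1 + ‖v t‖ ^ 2)) ∂μ')
          = ENNReal.ofReal (M * c * δ) * ∫⁻ t, ENNReal.ofReal (1 + ‖v t‖ ^ 2) ∂μ' := by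
        rw [← lintegral_const_mul'' _ hvaem]
        refine lintegral_congr fun t => ?_
        rw [← ENNReal.ofReal_mul (by positivity)]
      have h4 : ENNReal.ofReal (M * c * δ) * (∫⁻ t, ENNReal.ofReal (1 + ‖v t‖ ^ 2) ∂μ') ≤ ε := hδ
      calc (∫⁻ t, ENNReal.ofReal (μw t * ψ (a t) (v t)) ∂μ')
          ≤ _ := h1
        _ = _ := h2
        _ ≤ (∫⁻ t, ENNReal.ofReal (μw t * ψ (b t) (v t)) ∂μ') + ε := by
            rw [h3]; exact add_le_add_right h4 _
    constructor
    · exact key (u k) ulim (hukm k) hulm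
        (hpt.mono fun t h => by have := (abs_le.mp h).2; linarith)
    · exact key ulim (u k) hulm (hukm k)
        (hpt.mono fun t h => by have := (abs_le.mp h).1; linarith)
end

section
/- Let H be a real Hilbert space and ψ ∈ C²(H × H; [0,∞)). Assume that for some R > 0 there are constants c₈, c₁₀ > 0 such that ‖d₂ψ(u₁,v) − d₂ψ(u₂,v)‖_H ≤ c₈‖u₁ − u₂‖_H‖v‖_H for all u₁, u₂, v ∈ H with ‖u₁‖_H, ‖u₂‖_H ≤ R, and (d₂₂ψ(u,v)w, w) ≥ c₁₀‖w‖_H² for all u, v, w ∈ H with ‖u‖_H ≤ R. Then for all u₁, u₂, v₁, v₂ ∈ H with ‖u₁‖_H, ‖u₂‖_H ≤ R one has (d₂ψ(u₁,v₁) − d₂ψ(u₂,v₂), v₁ − v₂) ≥ (c₁₀/2)‖v₁ − v₂‖_H² − (c₈²/(2c₁₀))‖u₁ − u₂‖_H²‖v₂‖_H². -/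
open MeasureTheory Filter Topology
open scoped RealInnerProductSpace

/-- Monotonicity of the gradient of a `C²` function whose second derivative is coercive. -/
lemma mono_aux {H : Type*} [NormedAddCommGroup H] [InnerProductSpace ℝ H]
    (f : H → ℝ) (hf : ContDiff ℝ 2 f) (c : ℝ)
    (hcoer : ∀ v w : H, c * ‖w‖ ^ 2 ≤ fderiv ℝ (fun y => fderiv ℝ f y) v w w) :
    ∀ v₁ v₂ : H, c * ‖v₁ - v₂‖ ^ 2 ≤ (fderiv ℝ f v₁ - fderiv ℝ f v₂) (v₁ - v₂) := by
  intro v₁ v₂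
  set w := v₁ - v₂ with hw
  set F : H → (H →L[ℝ] ℝ) := fun y => fderiv ℝ f y with hF
  have hFdiff : Differentiable ℝ F := by
    have : ContDiff ℝ 1 F := hf.fderiv_right (le_refl _)
    exact this.differentiable one_ne_zero
  set ℓ : ℝ → H := fun t => v₂ + t • w with hℓdef
  have hℓ : ∀ t : ℝ, HasDerivAt ℓ w t := by
    intro t
    have h1 : HasDerivAt (fun t : ℝ => t • w) w t := by
      simpa using (hasDerivAt_id t).smul_const w
    simpa [hℓdef] using h1.const_add v₂
  set g : ℝ → ℝ := fun t => F (ℓ t) w with hg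
  have hg' : ∀ t : ℝ, HasDerivAt g (fderiv ℝ F (ℓ t) w w) t := by
    intro t
    have hFd : HasFDerivAt F (fderiv ℝ F (ℓ t)) (ℓ t) := (hFdiff (ℓ t)).hasFDerivAt
    have h1 : HasDerivAt (fun t => F (ℓ t)) (fderiv ℝ F (ℓ t) w) t :=
      hFd.comp_hasDerivAt t (hℓ t)
    have h2 := (ContinuousLinearMap.apply ℝ ℝ w).hasFDerivAt.comp_hasDerivAt t h1
    exact h2
  set φ : ℝ → ℝ := fun t => g t - c * ‖w‖ ^ 2 * t with hφ
  have hφ' : ∀ t : ℝ, HasDerivAt φ (fderiv ℝ F (ℓ t) w w - c * ‖w‖ ^ 2) t := by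
    intro t
    exact ((hg' t).sub ((hasDerivAt_id t).const_mul (c * ‖w‖ ^ 2))).congr_deriv (by ring)
  have hmono : Monotone φ := by
    apply monotone_of_deriv_nonneg
    · exact fun t => (hφ' t).differentiableAt
    · intro t
      rw [(hφ' t).deriv]
      have := hcoer (ℓ t) w
      linarith
  have h01 : φ 0 ≤ φ 1 := hmono (by norm_num)
  have hℓ0 : ℓ 0 = v₂ := by simp [hℓdef]
  have hℓ1 : ℓ 1 = v₁ := by simp [hℓdef, hw]
  have : g 0 ≤ g 1 - c * ‖w‖ ^ 2 := by
    simp only [hφ] at h01; linarith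
  simp only [hg, hℓ0, hℓ1, hF] at this
  simp only [ContinuousLinearMap.sub_apply]
  linarith

/-- Strong monotonicity-type estimate for the second partial differential of `ψ`:
under a Lipschitz bound on `d₂ψ` in the first variable and coercivity of `d₂₂ψ`,
`(d₂ψ(u₁,v₁) − d₂ψ(u₂,v₂), v₁ − v₂) ≥ (c₁₀/2)‖v₁−v₂‖² − (c₈²/(2c₁₀))‖u₁−u₂‖²‖v₂‖²`. -/
theorem stmt_5 {H : Type*} [NormedAddCommGroup H] [InnerProductSpace ℝ H] [CompleteSpace H]
    (ψ : H → H → ℝ) (hψnn : ∀ u v : H, 0 ≤ ψ u v)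
    (hψC2 : ContDiff ℝ 2 (fun p : H × H => ψ p.1 p.2))
    (R c₈ c₁₀ : ℝ) (hR : 0 < R) (hc₈ : 0 < c₈) (hc₁₀ : 0 < c₁₀)
    (hLip : ∀ u₁ u₂ v : H, ‖u₁‖ ≤ R → ‖u₂‖ ≤ R →
      ‖fderiv ℝ (ψ u₁) v - fderiv ℝ (ψ u₂) v‖ ≤ c₈ * ‖u₁ - u₂‖ * ‖v‖)
    (hcoer : ∀ u v w : H, ‖u‖ ≤ R →
      c₁₀ * ‖w‖ ^ 2 ≤ fderiv ℝ (fun y => fderiv ℝ (ψ u) y) v w w) :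
    ∀ u₁ u₂ v₁ v₂ : H, ‖u₁‖ ≤ R → ‖u₂‖ ≤ R →
      (fderiv ℝ (ψ u₁) v₁ - fderiv ℝ (ψ u₂) v₂) (v₁ - v₂) ≥
        c₁₀ / 2 * ‖v₁ - v₂‖ ^ 2 - c₈ ^ 2 / (2 * c₁₀) * ‖u₁ - u₂‖ ^ 2 * ‖v₂‖ ^ 2 := by
  intro u₁ u₂ v₁ v₂ hu₁ hu₂
  have hfC2 : ContDiff ℝ 2 (ψ u₁) := by
    have : ContDiff ℝ 2 (fun y : H => (u₁, y)) := contDiff_const.prodMk contDiff_id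
    exact hψC2.comp this
  -- monotonicity part
  have hmono := mono_aux (ψ u₁) hfC2 c₁₀ (fun v w => hcoer u₁ v w hu₁) v₁ v₂
  -- Lipschitz part
  have hlip : |(fderiv ℝ (ψ u₁) v₂ - fderiv ℝ (ψ u₂) v₂) (v₁ - v₂)| ≤
      c₈ * ‖u₁ - u₂‖ * ‖v₂‖ * ‖v₁ - v₂‖ := by
    calc |(fderiv ℝ (ψ u₁) v₂ - fderiv ℝ (ψ u₂) v₂) (v₁ - v₂)|
        ≤ ‖fderiv ℝ (ψ u₁) v₂ - fderiv ℝ (ψ u₂) v₂‖ * ‖v₁ - v₂‖ :=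
          (fderiv ℝ (ψ u₁) v₂ - fderiv ℝ (ψ u₂) v₂).le_opNorm (v₁ - v₂)
      _ ≤ c₈ * ‖u₁ - u₂‖ * ‖v₂‖ * ‖v₁ - v₂‖ :=
          mul_le_mul_of_nonneg_right (hLip u₁ u₂ v₂ hu₁ hu₂) (norm_nonneg _)
  have hsplit : (fderiv ℝ (ψ u₁) v₁ - fderiv ℝ (ψ u₂) v₂) (v₁ - v₂) =
      (fderiv ℝ (ψ u₁) v₁ - fderiv ℝ (ψ u₁) v₂) (v₁ - v₂) +
      (fderiv ℝ (ψ u₁) v₂ - fderiv ℝ (ψ u₂) v₂) (v₁ - v₂) := by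
    simp only [ContinuousLinearMap.sub_apply]; ring
  rw [ge_iff_le, hsplit]
  have habs := (abs_le.mp hlip).1
  have key : c₁₀ / 2 * ‖v₁ - v₂‖ ^ 2 - c₈ ^ 2 / (2 * c₁₀) * ‖u₁ - u₂‖ ^ 2 * ‖v₂‖ ^ 2 ≤
      c₁₀ * ‖v₁ - v₂‖ ^ 2 - c₈ * ‖u₁ - u₂‖ * ‖v₂‖ * ‖v₁ - v₂‖ := by
    rw [← sub_nonneg]
    have heq : c₁₀ * ‖v₁ - v₂‖ ^ 2 - c₈ * ‖u₁ - u₂‖ * ‖v₂‖ * ‖v₁ - v₂‖ -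
        (c₁₀ / 2 * ‖v₁ - v₂‖ ^ 2 - c₈ ^ 2 / (2 * c₁₀) * ‖u₁ - u₂‖ ^ 2 * ‖v₂‖ ^ 2) =
        (c₁₀ * ‖v₁ - v₂‖ - c₈ * ‖u₁ - u₂‖ * ‖v₂‖) ^ 2 / (2 * c₁₀) := by
      field_simp
      ring
    rw [heq]
    positivity
  linarith
end

section
/- Under assumptions (A1)–(A2), let u be a global minimizer of the regularized WED functional W^{ελ} over K₀(u₀). Then ∫₀ᵀ ‖u̇(t)‖_H² dt ≤ c₄(φ¹_λ(u₀) + φ²_λ(u₀)) ≤ c₄(φ¹(u₀) + φ²(u₀)); in particular the L²(0,T;H)-norm of u̇ is bounded independently of ε and λ. -/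
open MeasureTheory Filter Topology
open scoped RealInnerProductSpace ENNReal

/-- The subdifferential (in `H`) of an extended-real-valued functional `f`:
`η ∈ ∂f(u)` iff `u ∈ D(f)` and `(η, v − u) ≤ f(v) − f(u)` for all `v`. -/
def InSubdiff {H : Type*} [NormedAddCommGroup H] [InnerProductSpace ℝ H]
    (f : H → ℝ≥0∞) (u η : H) : Prop :=
  f u ≠ ⊤ ∧ ∀ v : H, f v ≠ ⊤ → ⟪η, v - u⟫ ≤ (f v).toReal - (f u).toReal

/-- Moreau–Yosida regularization of `f` at level `lam` (extended-real-valued). -/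
noncomputable def MYe {H : Type*} [NormedAddCommGroup H] [InnerProductSpace ℝ H]
    (f : H → ℝ≥0∞) (lam : ℝ) (u : H) : ℝ≥0∞ :=
  ⨅ v : H, ENNReal.ofReal (‖u - v‖ ^ 2 / (2 * lam)) + f v

/-- The functional `φ¹(u) = ⟨Au,u⟩/2` if `u = ι x ∈ X`, `∞` otherwise, encoded through the
continuous symmetric bilinear form `a x y = ⟨Ax,y⟩` on `X`. -/
noncomputable def phiOne {X H : Type*}
    [NormedAddCommGroup X] [InnerProductSpace ℝ X]
    [NormedAddCommGroup H] [InnerProductSpace ℝ H]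
    (ι : X →L[ℝ] H) (a : X →L[ℝ] X →L[ℝ] ℝ) (u : H) : ℝ≥0∞ :=
  ⨅ (x : X) (_ : ι x = u), ENNReal.ofReal (a x x / 2)

/-- Membership in `H¹(0,T;H)`, witnessed by the a.e. derivative `u'`. -/
def InH1 {H : Type*} [NormedAddCommGroup H] [InnerProductSpace ℝ H] [CompleteSpace H]
    (T : ℝ) (u u' : ℝ → H) : Prop :=
  ContinuousOn u (Set.Icc 0 T) ∧
  MemLp u' 2 (volume.restrict (Set.Ioc 0 T)) ∧
  ∀ t ∈ Set.Icc 0 T, u t = u 0 + ∫ s in (0:ℝ)..t, u' s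

/-- The (possibly regularized) WED integral
`∫₀ᵀ e^{−t/ε} ( ε ψ(Jl u, u̇) + f₁(u) + f₂(u) ) dt`, as an extended real number. -/
noncomputable def WEDval {H : Type*} [NormedAddCommGroup H] [InnerProductSpace ℝ H]
    (ψ : H → H → ℝ) (f₁ f₂ : H → ℝ≥0∞) (ε T : ℝ) (Jl : H → H) (u u' : ℝ → H) : ℝ≥0∞ :=
  ∫⁻ t in Set.Ioc 0 T, ENNReal.ofReal (Real.exp (-t / ε)) *
    (ENNReal.ofReal (ε * ψ (Jl (u t)) (u' t)) + f₁ (u t) + f₂ (u t))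

namespace Stmt11Aux

variable {H : Type*} [NormedAddCommGroup H] [InnerProductSpace ℝ H]

lemma MYe_le (f : H → ℝ≥0∞) (lam : ℝ) (u v : H) :
    MYe f lam u ≤ ENNReal.ofReal (‖u - v‖ ^ 2 / (2 * lam)) + f v := iInf_le _ v

lemma MYe_le_self (f : H → ℝ≥0∞) (lam : ℝ) (u : H) : MYe f lam u ≤ f u := by
  simpa using MYe_le f lam u u

lemma MYe_usc (f : H → ℝ≥0∞) (lam : ℝ) : UpperSemicontinuous (MYe f lam) := by
  intro x y hy
  obtain ⟨v, hv⟩ := iInf_lt_iff.mp hy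
  have hcont : Continuous fun w : H => ENNReal.ofReal (‖w - v‖ ^ 2 / (2 * lam)) + f v := by
    refine ((ENNReal.continuous_ofReal.comp ?_).add continuous_const)
    exact ((continuous_id.sub continuous_const).norm.pow 2).div_const _
  filter_upwards [(hcont.tendsto x).eventually_lt_const hv] with w hw
  exact lt_of_le_of_lt (MYe_le f lam w v) hw

lemma MYe_measurable [MeasurableSpace H] [OpensMeasurableSpace H]
    (f : H → ℝ≥0∞) (lam : ℝ) : Measurable (MYe f lam) :=
  (MYe_usc f lam).measurable

/-- fundamental computation: `∫⁻_{(a,b]} ofReal (g t) = ofReal (F b - F a)`. -/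
lemma lint_ofReal_Ioc {g F : ℝ → ℝ} (hg : Continuous g) (hg0 : ∀ x, 0 ≤ g x)
    {a b : ℝ} (hab : a ≤ b) (hF : ∀ x, HasDerivAt F (g x) x) :
    ∫⁻ t in Set.Ioc a b, ENNReal.ofReal (g t) = ENNReal.ofReal (F b - F a) := by
  have hInt : IntegrableOn g (Set.Ioc a b) := hg.integrableOn_Ioc
  rw [← ofReal_integral_eq_lintegral_ofReal hInt (ae_of_all _ hg0)]
  congr 1
  rw [← intervalIntegral.integral_of_le hab]
  exact intervalIntegral.integral_eq_sub_of_hasDerivAt (fun x _ => hF x)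
    (hg.intervalIntegrable a b)

lemma lint_exp_neg {ε : ℝ} (hε : 0 < ε) {s T : ℝ} (hsT : s ≤ T) :
    ∫⁻ t in Set.Ioc s T, ENNReal.ofReal (Real.exp (-t / ε))
      = ENNReal.ofReal (ε * (Real.exp (-s / ε) - Real.exp (-T / ε))) := by
  have hF : ∀ x : ℝ, HasDerivAt (fun t => -ε * Real.exp (-t / ε)) (Real.exp (-x / ε)) x := by
    intro x
    have h1 : HasDerivAt (fun t : ℝ => -t / ε) (-1 / ε) x := by
      simpa using (hasDerivAt_id x).neg.div_const ε
    have h2 := h1.exp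
    have h3 := h2.const_mul (-ε)
    convert h3 using 1
    · rfl
    · rfl
    have hε0 : ε ≠ 0 := hε.ne'
    field_simp
  rw [lint_ofReal_Ioc (by continuity) (fun x => (Real.exp_pos _).le) hsT hF]
  congr 1
  ring

lemma lint_exp_pos {ε : ℝ} (hε : 0 < ε) {t : ℝ} (ht : 0 ≤ t) :
    ∫⁻ s in Set.Ioo 0 t, ENNReal.ofReal (Real.exp (s / ε) / ε)
      = ENNReal.ofReal (Real.exp (t / ε) - 1) := by
  have hrw : volume.restrict (Set.Ioo (0:ℝ) t) = volume.restrict (Set.Ioc 0 t) :=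
    Measure.restrict_congr_set Ioo_ae_eq_Ioc
  rw [hrw]
  have hF : ∀ x : ℝ, HasDerivAt (fun s => Real.exp (s / ε)) (Real.exp (x / ε) / ε) x := by
    intro x
    have h1 : HasDerivAt (fun s : ℝ => s / ε) (1 / ε) x := by
      simpa using (hasDerivAt_id x).div_const ε
    have h2 := h1.exp
    convert h2 using 1
    field_simp
  rw [lint_ofReal_Ioc ?_ (fun x => by positivity) ht hF]
  · simp [Real.exp_zero]
  · continuity

end Stmt11Aux

namespace Stmt11Aux2
open Stmt11Aux

theorem core {H : Type*} [NormedAddCommGroup H] [InnerProductSpace ℝ H] [CompleteSpace H]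
    [MeasurableSpace H] [BorelSpace H] [SecondCountableTopology H]
    (T ε : ℝ) (hT : 0 < T) (hε : 0 < ε)
    (f₁ f₂ : H → ℝ≥0∞) (hf₁ : Measurable f₁) (hf₂ : Measurable f₂)
    (ψ : H → H → ℝ) (hψcont : Continuous fun p : H × H => ψ p.1 p.2)
    (hψ0 : ∀ w : H, ψ w 0 = 0)
    (Jl : H → H) (hJlcont : Continuous Jl)
    (u₀ : H) (hf₁0 : f₁ u₀ ≠ ⊤) (hf₂0 : f₂ u₀ ≠ ⊤)
    (u u' : ℝ → H) (huH1 : InH1 T u u') (hu0 : u 0 = u₀)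
    (M : ℝ≥0∞) (hMne : M ≠ ⊤) (hBM : ∀ t ∈ Set.Icc 0 T, f₁ (u t) + f₂ (u t) ≤ M)
    (hmin : ∀ v v' : ℝ → H, InH1 T v v' → v 0 = u₀ →
      WEDval ψ f₁ f₂ ε T Jl u u' ≤ WEDval ψ f₁ f₂ ε T Jl v v') :
    ∫⁻ t in Set.Ioc 0 T, ENNReal.ofReal (ψ (Jl (u t)) (u' t)) ≤ f₁ u₀ + f₂ u₀ := by
  classical
  obtain ⟨hu_cont, hu'_L2, hu_int⟩ := huH1
  have hT0 : (0:ℝ) ≤ T := hT.le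
  have hε' : ε ≠ 0 := hε.ne'
  haveI hμfin : IsFiniteMeasure (volume.restrict (Set.Ioc (0:ℝ) T)) :=
    ⟨by rw [Measure.restrict_apply_univ]; exact measure_Ioc_lt_top⟩
  -- measurability of the basic objects
  have hu_meas : AEMeasurable u (volume.restrict (Set.Ioc 0 T)) :=
    (hu_cont.aemeasurable measurableSet_Icc).mono_measure
      (Measure.restrict_mono Set.Ioc_subset_Icc_self le_rfl)
  have hu'_meas : AEMeasurable u' (volume.restrict (Set.Ioc 0 T)) :=
    hu'_L2.aestronglyMeasurable.aemeasurable
  have hψJ_meas : AEMeasurable (fun t => ψ (Jl (u t)) (u' t)) (volume.restrict (Set.Ioc 0 T)) := by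
    have hpair : AEMeasurable (fun t => (Jl (u t), u' t)) (volume.restrict (Set.Ioc 0 T)) :=
      ((hJlcont.measurable.comp_aemeasurable hu_meas).prodMk hu'_meas)
    exact hψcont.measurable.comp_aemeasurable hpair
  have hE_meas : Measurable fun t : ℝ => ENNReal.ofReal (Real.exp (-t / ε)) :=
    ENNReal.measurable_ofReal.comp
      ((Real.continuous_exp.comp (continuous_id.neg.div_const ε)).measurable)
  have hk_meas : Measurable fun s : ℝ => ENNReal.ofReal (Real.exp (s / ε) / ε) :=
    ENNReal.measurable_ofReal.comp
      (((Real.continuous_exp.comp (continuous_id.div_const ε)).div_const ε).measurable)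
  -- the common integrand
  obtain ⟨g, hg⟩ : ∃ g : (ℝ → H) → (ℝ → H) → ℝ → ℝ≥0∞, ∀ w w' t,
      g w w' t = ENNReal.ofReal (Real.exp (-t / ε)) *
        (ENNReal.ofReal (ε * ψ (Jl (w t)) (w' t)) + f₁ (w t) + f₂ (w t)) :=
    ⟨_, fun _ _ _ => rfl⟩
  have hWED : ∀ w w' : ℝ → H, WEDval ψ f₁ f₂ ε T Jl w w' = ∫⁻ t in Set.Ioc 0 T, g w w' t :=
    fun w w' => lintegral_congr fun t => (hg w w' t).symm
  have hgmeas : AEMeasurable (g u u') (volume.restrict (Set.Ioc 0 T)) := by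
    have hfun : g u u' = fun t => ENNReal.ofReal (Real.exp (-t / ε)) *
        (ENNReal.ofReal (ε * ψ (Jl (u t)) (u' t)) + f₁ (u t) + f₂ (u t)) := funext (hg u u')
    rw [hfun]
    exact hE_meas.aemeasurable.mul
      (((ENNReal.measurable_ofReal.comp_aemeasurable (hψJ_meas.const_mul ε)).add
        (hf₁.comp_aemeasurable hu_meas)).add (hf₂.comp_aemeasurable hu_meas))
  -- (F1) comparison with the constant competitor
  have hexp_le : ∀ s : ℝ, ε * (Real.exp (-s / ε) - Real.exp (-T / ε)) ≤ ε * Real.exp (-s / ε) := by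
    intro s
    nlinarith [Real.exp_pos (-T / ε)]
  have hIconst : InH1 T (fun _ : ℝ => u₀) (fun _ : ℝ => (0:H)) := by
    refine ⟨continuousOn_const, memLp_const 0, fun t ht => by simp⟩
  have hWle : WEDval ψ f₁ f₂ ε T Jl u u' ≤ (f₁ u₀ + f₂ u₀) * ENNReal.ofReal ε := by
    refine le_trans (hmin _ _ hIconst rfl) ?_
    have hconst : WEDval ψ f₁ f₂ ε T Jl (fun _ => u₀) (fun _ => 0)
        = (∫⁻ t in Set.Ioc 0 T, ENNReal.ofReal (Real.exp (-t / ε))) * (f₁ u₀ + f₂ u₀) := by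
      rw [WEDval]
      rw [show (fun t : ℝ => ENNReal.ofReal (Real.exp (-t / ε)) *
          (ENNReal.ofReal (ε * ψ (Jl u₀) 0) + f₁ u₀ + f₂ u₀)) = fun t : ℝ =>
          ENNReal.ofReal (Real.exp (-t / ε)) * (f₁ u₀ + f₂ u₀) by
        funext t; rw [hψ0, mul_zero, ENNReal.ofReal_zero, zero_add]]
      exact lintegral_mul_const _ hE_meas
    rw [hconst, lint_exp_neg hε hT0, mul_comm]
    refine mul_le_mul_right (ENNReal.ofReal_le_ofReal ?_) _
    rw [show (-0:ℝ)/ε = 0 by norm_num, Real.exp_zero]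
    nlinarith [Real.exp_pos (-T/ε)]
  have hB₀ne : f₁ u₀ + f₂ u₀ ≠ ⊤ := ENNReal.add_ne_top.mpr ⟨hf₁0, hf₂0⟩
  have hWne : WEDval ψ f₁ f₂ ε T Jl u u' ≠ ⊤ :=
    ne_top_of_le_ne_top (ENNReal.mul_ne_top hB₀ne ENNReal.ofReal_ne_top) hWle
  -- integrability of u'
  have hu'_int : IntegrableOn u' (Set.Ioc 0 T) := hu'_L2.integrable one_le_two
  -- (F2) stopped comparison
  have hstop : ∀ s ∈ Set.Icc (0:ℝ) T,
      (∫⁻ t in Set.Ioc s T, g u u' t) ≤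
        (f₁ (u s) + f₂ (u s)) * ENNReal.ofReal (ε * Real.exp (-s / ε)) := by
    intro s hs
    obtain ⟨hs0, hsT⟩ := hs
    set v : ℝ → H := fun t => u (min t s) with hv
    set v' : ℝ → H := fun t => Set.indicator (Set.Iic s) u' t with hv'
    have hv0 : v 0 = u₀ := by rw [hv]; simp only [min_eq_left hs0]; exact hu0
    have hvH1 : InH1 T v v' := by
      refine ⟨?_, hu'_L2.indicator measurableSet_Iic, ?_⟩
      · exact hu_cont.comp ((continuous_id.min continuous_const).continuousOn)
          (fun t ht => ⟨le_min ht.1 hs0, min_le_of_left_le ht.2⟩)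
      · intro t ht
        rw [show v 0 = u 0 by rw [hv]; simp only [min_eq_left hs0]]
        by_cases hts : t ≤ s
        · have h1 : v t = u t := by rw [hv]; simp only [min_eq_left hts]
          rw [h1, hu_int t ht]
          congr 1
          refine (intervalIntegral.integral_congr fun x hx => ?_).symm
          have hx' : x ∈ Set.Icc 0 t := by rwa [Set.uIcc_of_le ht.1] at hx
          simp [hv', Set.indicator_apply, Set.mem_Iic, hx'.2.trans hts]
        · push_neg at hts
          have hvt : v t = u s := by rw [hv]; simp only [min_eq_right hts.le]
          have hIl : IntervalIntegrable v' volume 0 s := by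
            rw [intervalIntegrable_iff_integrableOn_Ioc_of_le hs0]
            exact (hu'_int.mono_set (Set.Ioc_subset_Ioc le_rfl hsT)).indicator measurableSet_Iic
          have hIr : IntervalIntegrable v' volume s t := by
            rw [intervalIntegrable_iff_integrableOn_Ioc_of_le hts.le]
            exact (hu'_int.mono_set (Set.Ioc_subset_Ioc hs0 ht.2)).indicator measurableSet_Iic
          rw [hvt, hu_int s ⟨hs0, hsT⟩, ← intervalIntegral.integral_add_adjacent_intervals hIl hIr]
          have e1 : ∫ x in (0:ℝ)..s, v' x = ∫ x in (0:ℝ)..s, u' x := by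
            refine intervalIntegral.integral_congr fun x hx => ?_
            have hx' : x ∈ Set.Icc 0 s := by rwa [Set.uIcc_of_le hs0] at hx
            simp [hv', Set.indicator_apply, Set.mem_Iic, hx'.2]
          have e2 : ∫ x in s..t, v' x = 0 := by
            rw [intervalIntegral.integral_of_le hts.le]
            have : Set.EqOn v' (fun _ => (0:H)) (Set.Ioc s t) := fun x hx => by
              simp [hv', Set.indicator_apply, Set.mem_Iic, not_le.mpr hx.1]
            rw [setIntegral_congr_fun measurableSet_Ioc this]
            simp
          rw [e1, e2, add_zero]
    -- compute the two sides of minimality, split at s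
    have hsplit : ∀ w w' : ℝ → H, WEDval ψ f₁ f₂ ε T Jl w w' =
        (∫⁻ t in Set.Ioc 0 s, g w w' t) + ∫⁻ t in Set.Ioc s T, g w w' t := by
      intro w w'
      rw [hWED, ← Set.Ioc_union_Ioc_eq_Ioc hs0 hsT,
        lintegral_union measurableSet_Ioc (Set.Ioc_disjoint_Ioc_of_le le_rfl)]
    have hcong1 : (∫⁻ t in Set.Ioc 0 s, g v v' t) = ∫⁻ t in Set.Ioc 0 s, g u u' t := by
      refine setLIntegral_congr_fun measurableSet_Ioc (fun t ht => ?_)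
      rw [hg, hg]
      have h1 : v t = u t := by rw [hv]; simp only [min_eq_left ht.2]
      have h2 : v' t = u' t := by simp [hv', Set.indicator_apply, Set.mem_Iic, ht.2]
      rw [h1, h2]
    have hcong2 : (∫⁻ t in Set.Ioc s T, g v v' t)
        = (∫⁻ t in Set.Ioc s T, ENNReal.ofReal (Real.exp (-t / ε))) * (f₁ (u s) + f₂ (u s)) := by
      rw [← lintegral_mul_const _ hE_meas]
      refine setLIntegral_congr_fun measurableSet_Ioc (fun t ht => ?_)
      rw [hg]
      have h1 : v t = u s := by rw [hv]; simp only [min_eq_right ht.1.le]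
      have h2 : v' t = 0 := by simp [hv', Set.indicator_apply, Set.mem_Iic, not_le.mpr ht.1]
      rw [h1, h2, hψ0, mul_zero, ENNReal.ofReal_zero, zero_add]
    have hm := hmin v v' hvH1 hv0
    rw [hsplit u u', hsplit v v', hcong1, hcong2] at hm
    have hI1ne : (∫⁻ t in Set.Ioc 0 s, g u u' t) ≠ ⊤ := by
      refine ne_top_of_le_ne_top hWne ?_
      rw [hsplit u u']
      exact le_self_add
    have hkey := (ENNReal.add_le_add_iff_left hI1ne).mp hm
    refine le_trans hkey ?_
    rw [lint_exp_neg hε hsT, mul_comm]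
    exact mul_le_mul_right (ENNReal.ofReal_le_ofReal (hexp_le s)) _
  -- measurable representative of g u u'
  obtain ⟨h', h'meas, h'eq⟩ : ∃ h' : ℝ → ℝ≥0∞, Measurable h' ∧
      g u u' =ᵐ[volume.restrict (Set.Ioc 0 T)] h' :=
    ⟨hgmeas.mk _, hgmeas.measurable_mk, hgmeas.ae_eq_mk⟩
  -- pointwise (in s) estimate, with the weight e^{s/ε}/ε
  have hstop' : ∀ s ∈ Set.Ioc (0:ℝ) T,
      ENNReal.ofReal (Real.exp (s / ε) / ε) * ∫⁻ t in Set.Ioc s T, h' t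
        ≤ f₁ (u s) + f₂ (u s) := by
    intro s hs
    have he : (∫⁻ t in Set.Ioc s T, h' t) = ∫⁻ t in Set.Ioc s T, g u u' t :=
      (lintegral_congr_ae
        (ae_restrict_of_ae_restrict_of_subset (Set.Ioc_subset_Ioc_left hs.1.le) h'eq)).symm
    rw [he]
    refine le_trans (mul_le_mul_right (hstop s ⟨hs.1.le, hs.2⟩) _) ?_
    have hone : ENNReal.ofReal (ε * Real.exp (-s / ε)) *
        ENNReal.ofReal (Real.exp (s / ε) / ε) = 1 := by
      rw [← ENNReal.ofReal_mul (by positivity)]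
      rw [show ε * Real.exp (-s / ε) * (Real.exp (s / ε) / ε) = 1 from by
        rw [neg_div, Real.exp_neg]; field_simp]
      exact ENNReal.ofReal_one
    calc ENNReal.ofReal (Real.exp (s / ε) / ε) *
          ((f₁ (u s) + f₂ (u s)) * ENNReal.ofReal (ε * Real.exp (-s / ε)))
        = (f₁ (u s) + f₂ (u s)) * (ENNReal.ofReal (ε * Real.exp (-s / ε)) *
            ENNReal.ofReal (Real.exp (s / ε) / ε)) := by ring
      _ = f₁ (u s) + f₂ (u s) := by rw [hone, mul_one]
      _ ≤ f₁ (u s) + f₂ (u s) := le_rfl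
  -- Tonelli
  have hswap_all :
      (∫⁻ s in Set.Ioc 0 T, ENNReal.ofReal (Real.exp (s / ε) / ε) * ∫⁻ t in Set.Ioc s T, h' t)
        = ∫⁻ t in Set.Ioc 0 T, ENNReal.ofReal (Real.exp (t / ε) - 1) * h' t := by
    have hFmeas : Measurable (Function.uncurry fun s t =>
        ENNReal.ofReal (Real.exp (s / ε) / ε) * (Set.Ioi s).indicator h' t) := by
      have huncurry : (Function.uncurry fun s t =>
          ENNReal.ofReal (Real.exp (s / ε) / ε) * (Set.Ioi s).indicator h' t)
          = fun p : ℝ × ℝ => ENNReal.ofReal (Real.exp (p.1 / ε) / ε) *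
              ({q : ℝ × ℝ | q.1 < q.2}.indicator (fun q => h' q.2) p) := by
        funext p
        simp only [Function.uncurry, Set.indicator_apply, Set.mem_Ioi, Set.mem_setOf_eq]
      rw [huncurry]
      exact (hk_meas.comp measurable_fst).mul
        ((h'meas.comp measurable_snd).indicator (measurableSet_lt measurable_fst measurable_snd))
    have hswap := lintegral_lintegral_swap (μ := volume.restrict (Set.Ioc 0 T))
      (ν := volume.restrict (Set.Ioc 0 T)) hFmeas.aemeasurable
    calc (∫⁻ s in Set.Ioc 0 T, ENNReal.ofReal (Real.exp (s / ε) / ε) * ∫⁻ t in Set.Ioc s T, h' t)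
        = ∫⁻ s in Set.Ioc 0 T, ∫⁻ t in Set.Ioc 0 T,
            ENNReal.ofReal (Real.exp (s / ε) / ε) * (Set.Ioi s).indicator h' t := by
          refine setLIntegral_congr_fun measurableSet_Ioc (fun s hs => ?_)
          rw [lintegral_const_mul' _ _ ENNReal.ofReal_ne_top]
          congr 1
          rw [lintegral_indicator measurableSet_Ioi,
            Measure.restrict_restrict measurableSet_Ioi,
            show Set.Ioi s ∩ Set.Ioc 0 T = Set.Ioc s T from by
              ext x
              simp only [Set.mem_inter_iff, Set.mem_Ioi, Set.mem_Ioc]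
              exact ⟨fun hx => ⟨hx.1, hx.2.2⟩, fun hx => ⟨hx.1, lt_trans hs.1 hx.1, hx.2⟩⟩]
      _ = ∫⁻ t in Set.Ioc 0 T, ∫⁻ s in Set.Ioc 0 T,
            ENNReal.ofReal (Real.exp (s / ε) / ε) * (Set.Ioi s).indicator h' t := hswap
      _ = ∫⁻ t in Set.Ioc 0 T, ENNReal.ofReal (Real.exp (t / ε) - 1) * h' t := by
          refine setLIntegral_congr_fun measurableSet_Ioc (fun t ht => ?_)
          have hind : ∀ s : ℝ, ENNReal.ofReal (Real.exp (s / ε) / ε) * (Set.Ioi s).indicator h' t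
              = (Set.Iio t).indicator
                  (fun s => ENNReal.ofReal (Real.exp (s / ε) / ε) * h' t) s := by
            intro s
            by_cases hst : s < t <;>
              simp [Set.indicator_apply, Set.mem_Ioi, Set.mem_Iio, hst]
          calc (∫⁻ s in Set.Ioc 0 T,
                ENNReal.ofReal (Real.exp (s / ε) / ε) * (Set.Ioi s).indicator h' t)
              = ∫⁻ s in Set.Ioc 0 T, (Set.Iio t).indicator
                  (fun s => ENNReal.ofReal (Real.exp (s / ε) / ε) * h' t) s :=
                lintegral_congr hind
            _ = ∫⁻ s in Set.Ioo 0 t, ENNReal.ofReal (Real.exp (s / ε) / ε) * h' t := by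
                rw [lintegral_indicator measurableSet_Iio,
                  Measure.restrict_restrict measurableSet_Iio,
                  show Set.Iio t ∩ Set.Ioc 0 T = Set.Ioo 0 t from by
                    ext x
                    simp only [Set.mem_inter_iff, Set.mem_Iio, Set.mem_Ioc, Set.mem_Ioo]
                    exact ⟨fun hx => ⟨hx.2.1, hx.1⟩,
                      fun hx => ⟨hx.2, hx.1, (le_of_lt hx.2).trans ht.2⟩⟩]
            _ = (∫⁻ s in Set.Ioo 0 t, ENNReal.ofReal (Real.exp (s / ε) / ε)) * h' t :=
                lintegral_mul_const _ hk_meas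
            _ = ENNReal.ofReal (Real.exp (t / ε) - 1) * h' t := by
                rw [lint_exp_pos hε ht.1.le]
  -- main inequality (†)
  have hT1 : (∫⁻ t in Set.Ioc 0 T, ENNReal.ofReal (1 - Real.exp (-t / ε)) *
      (ENNReal.ofReal (ε * ψ (Jl (u t)) (u' t)) + (f₁ (u t) + f₂ (u t))))
      ≤ ∫⁻ t in Set.Ioc 0 T, (f₁ (u t) + f₂ (u t)) := by
    have hmain : (∫⁻ s in Set.Ioc 0 T,
        ENNReal.ofReal (Real.exp (s / ε) / ε) * ∫⁻ t in Set.Ioc s T, h' t)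
        ≤ ∫⁻ s in Set.Ioc 0 T, (f₁ (u s) + f₂ (u s)) :=
      setLIntegral_mono' measurableSet_Ioc hstop'
    rw [hswap_all] at hmain
    refine le_trans (le_of_eq ?_) hmain
    refine lintegral_congr_ae ?_
    filter_upwards [h'eq, ae_restrict_mem measurableSet_Ioc] with t hteq htmem
    rw [← hteq, hg]
    have h1 : Real.exp (t / ε) * Real.exp (-t / ε) = 1 := by
      rw [← Real.exp_add, show t / ε + -t / ε = 0 from by ring, Real.exp_zero]
    have hnn : (0:ℝ) ≤ Real.exp (t / ε) - 1 := by
      nlinarith [Real.one_le_exp (div_nonneg htmem.1.le hε.le)]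
    have hsc : ENNReal.ofReal (1 - Real.exp (-t / ε))
        = ENNReal.ofReal (Real.exp (t / ε) - 1) * ENNReal.ofReal (Real.exp (-t / ε)) := by
      rw [← ENNReal.ofReal_mul hnn]
      congr 1
      nlinarith [h1]
    rw [hsc]
    ring
  -- pointwise decomposition of the full integrand
  have hc1_meas : Measurable fun t : ℝ => ENNReal.ofReal (1 - Real.exp (-t / ε)) :=
    ENNReal.measurable_ofReal.comp
      ((continuous_const.sub (Real.continuous_exp.comp (continuous_id.neg.div_const ε))).measurable)
  have hX_meas : AEMeasurable (fun t => ENNReal.ofReal (ε * ψ (Jl (u t)) (u' t)) +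
      (f₁ (u t) + f₂ (u t))) (volume.restrict (Set.Ioc 0 T)) :=
    (ENNReal.measurable_ofReal.comp_aemeasurable (hψJ_meas.const_mul ε)).add
      ((hf₁.comp_aemeasurable hu_meas).add (hf₂.comp_aemeasurable hu_meas))
  have hEsum : ∀ t ∈ Set.Ioc (0:ℝ) T,
      (ENNReal.ofReal (ε * ψ (Jl (u t)) (u' t)) + (f₁ (u t) + f₂ (u t)))
        = ENNReal.ofReal (1 - Real.exp (-t / ε)) *
            (ENNReal.ofReal (ε * ψ (Jl (u t)) (u' t)) + (f₁ (u t) + f₂ (u t)))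
          + ENNReal.ofReal (Real.exp (-t / ε)) *
            (ENNReal.ofReal (ε * ψ (Jl (u t)) (u' t)) + (f₁ (u t) + f₂ (u t))) := by
    intro t ht
    have hx0 : (0:ℝ) ≤ Real.exp (-t / ε) := (Real.exp_pos _).le
    have hx1 : Real.exp (-t / ε) ≤ 1 := by
      refine Real.exp_le_one_iff.mpr ?_
      rw [neg_div]
      exact neg_nonpos.mpr (div_nonneg ht.1.le hε.le)
    have hc : ENNReal.ofReal (1 - Real.exp (-t / ε)) + ENNReal.ofReal (Real.exp (-t / ε)) = 1 := by
      rw [← ENNReal.ofReal_add (by linarith) hx0]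
      norm_num
    rw [← add_mul, hc, one_mul]
  have hfinal_sum : (∫⁻ t in Set.Ioc 0 T,
      (ENNReal.ofReal (ε * ψ (Jl (u t)) (u' t)) + (f₁ (u t) + f₂ (u t))))
      ≤ (∫⁻ t in Set.Ioc 0 T, (f₁ (u t) + f₂ (u t))) + (f₁ u₀ + f₂ u₀) * ENNReal.ofReal ε := by
    have hsplitint : (∫⁻ t in Set.Ioc 0 T,
        (ENNReal.ofReal (ε * ψ (Jl (u t)) (u' t)) + (f₁ (u t) + f₂ (u t))))
        = (∫⁻ t in Set.Ioc 0 T, ENNReal.ofReal (1 - Real.exp (-t / ε)) *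
            (ENNReal.ofReal (ε * ψ (Jl (u t)) (u' t)) + (f₁ (u t) + f₂ (u t))))
          + ∫⁻ t in Set.Ioc 0 T, ENNReal.ofReal (Real.exp (-t / ε)) *
            (ENNReal.ofReal (ε * ψ (Jl (u t)) (u' t)) + (f₁ (u t) + f₂ (u t))) := by
      rw [← lintegral_add_left' (f := fun t => ENNReal.ofReal (1 - Real.exp (-t / ε)) *
          (ENNReal.ofReal (ε * ψ (Jl (u t)) (u' t)) + (f₁ (u t) + f₂ (u t)))) (hc1_meas.aemeasurable.mul hX_meas)]
      exact setLIntegral_congr_fun measurableSet_Ioc hEsum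
    rw [hsplitint]
    refine add_le_add hT1 ?_
    have hWeq : (∫⁻ t in Set.Ioc 0 T, ENNReal.ofReal (Real.exp (-t / ε)) *
        (ENNReal.ofReal (ε * ψ (Jl (u t)) (u' t)) + (f₁ (u t) + f₂ (u t))))
        = WEDval ψ f₁ f₂ ε T Jl u u' := by
      rw [hWED]
      exact lintegral_congr fun t => by rw [hg, add_assoc]
    rw [hWeq]
    exact hWle
  -- finiteness of ∫ B
  have hBfin : (∫⁻ t in Set.Ioc 0 T, (f₁ (u t) + f₂ (u t))) ≠ ⊤ := by
    have h1 : (∫⁻ t in Set.Ioc 0 T, (f₁ (u t) + f₂ (u t)))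
        ≤ M * (volume.restrict (Set.Ioc (0:ℝ) T)) Set.univ := by
      refine le_trans (lintegral_mono_ae ?_) (le_of_eq (lintegral_const M))
      filter_upwards [ae_restrict_mem measurableSet_Ioc] with t ht
      exact hBM t ⟨ht.1.le, ht.2⟩
    exact ne_top_of_le_ne_top (ENNReal.mul_ne_top hMne
      (by rw [Measure.restrict_apply_univ]; exact measure_Ioc_lt_top.ne)) h1
  -- cancel ∫ B
  have hsplit2 : (∫⁻ t in Set.Ioc 0 T,
      (ENNReal.ofReal (ε * ψ (Jl (u t)) (u' t)) + (f₁ (u t) + f₂ (u t))))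
      = (∫⁻ t in Set.Ioc 0 T, ENNReal.ofReal (ε * ψ (Jl (u t)) (u' t)))
        + ∫⁻ t in Set.Ioc 0 T, (f₁ (u t) + f₂ (u t)) :=
    lintegral_add_left' (ENNReal.measurable_ofReal.comp_aemeasurable (hψJ_meas.const_mul ε)) _
  have hcancel : (∫⁻ t in Set.Ioc 0 T, ENNReal.ofReal (ε * ψ (Jl (u t)) (u' t)))
      ≤ (f₁ u₀ + f₂ u₀) * ENNReal.ofReal ε := by
    have hthis := hfinal_sum
    rw [hsplit2, add_comm (∫⁻ t in Set.Ioc 0 T, (f₁ (u t) + f₂ (u t)))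
      ((f₁ u₀ + f₂ u₀) * ENNReal.ofReal ε)] at hthis
    exact (ENNReal.add_le_add_iff_right hBfin).mp hthis
  -- divide by ε
  have hscal : (∫⁻ t in Set.Ioc 0 T, ENNReal.ofReal (ε * ψ (Jl (u t)) (u' t)))
      = ENNReal.ofReal ε * ∫⁻ t in Set.Ioc 0 T, ENNReal.ofReal (ψ (Jl (u t)) (u' t)) := by
    rw [← lintegral_const_mul' _ _ ENNReal.ofReal_ne_top]
    exact lintegral_congr fun t => by rw [← ENNReal.ofReal_mul hε.le]
  rw [hscal, mul_comm] at hcancel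
  exact (ENNReal.mul_le_mul_iff_left (by simpa using (ENNReal.ofReal_pos.mpr hε).ne')
    ENNReal.ofReal_ne_top).mp hcancel

end Stmt11Aux2


/-- **A priori estimate (3.13):** for a global minimizer `u` of `W^{ελ}`,
`∫₀ᵀ ‖u̇‖² ≤ c₄(φ¹_λ(u₀) + φ²_λ(u₀)) ≤ c₄(φ¹(u₀) + φ²(u₀))`; in particular the
`L²(0,T;H)`-norm of `u̇` is bounded independently of `ε` and `λ`. -/
theorem stmt_11 {X H : Type*}
    [NormedAddCommGroup X] [InnerProductSpace ℝ X] [CompleteSpace X]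
    [TopologicalSpace.SeparableSpace X]
    [NormedAddCommGroup H] [InnerProductSpace ℝ H] [CompleteSpace H]
    [TopologicalSpace.SeparableSpace H]
    (T : ℝ) (hT : 0 < T)
    -- (A1): the embedding ι : X → H and the operator A (as a bilinear form a on X)
    (ι : X →L[ℝ] H) (hι_inj : Function.Injective ι) (hι_dense : DenseRange ι)
    (hι_cpt : IsCompactOperator ι)
    (a : X →L[ℝ] X →L[ℝ] ℝ) (hsym : ∀ x y : X, a x y = a y x) (hann : ∀ x : X, 0 ≤ a x x)
    (c₁ c₂ c₃ r : ℝ) (hc₁ : 0 < c₁) (hc₂ : 0 < c₂) (hc₃ : 0 < c₃) (hr : 2 ≤ r)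
    (hcoer1 : ∀ x : X, ‖x‖ ^ 2 ≤ c₁ * (1 + a x x / 2))
    (hAbdd : ∀ x : X, ‖a x‖ ≤ c₂ * ‖x‖)
    (φ2 : H → ℝ≥0∞) (hproper : ∃ w : H, φ2 w ≠ ⊤)
    (hconv2 : ∀ (w₁ w₂ : H) (s : ℝ), 0 ≤ s → s ≤ 1 →
      φ2 (s • w₁ + (1 - s) • w₂) ≤ ENNReal.ofReal s * φ2 w₁ + ENNReal.ofReal (1 - s) * φ2 w₂)
    (hlsc2 : LowerSemicontinuous φ2)
    (hgrowth2 : ∀ w η : H, InSubdiff φ2 w η → ‖η‖ ^ r ≤ c₃ * (1 + (φ2 w).toReal))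
    (u₀ : H) (hu₀1 : phiOne ι a u₀ ≠ ⊤) (hu₀2 : φ2 u₀ ≠ ⊤)
    -- (A2): the dissipation potential ψ
    (ψ : H → H → ℝ) (hψnn : ∀ u v : H, 0 ≤ ψ u v)
    (hψC2 : ContDiff ℝ 2 (fun p : H × H => ψ p.1 p.2))
    (hψconv : ∀ u : H, ConvexOn ℝ Set.univ (ψ u)) (hψ0 : ∀ u : H, ψ u 0 = 0)
    (c₄ : ℝ) (hc₄ : 0 < c₄) (hcoer4 : ∀ u v : H, ‖v‖ ^ 2 ≤ c₄ * ψ u v)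
    (hA2R : ∀ R : ℝ, 0 < R → ∃ c₅ c₆ c₇ c₈ c₉ c₁₀ : ℝ,
      0 < c₅ ∧ 0 < c₆ ∧ 0 < c₇ ∧ 0 < c₈ ∧ 0 < c₉ ∧ 0 < c₁₀ ∧
      (∀ u v : H, ‖u‖ ≤ R → ‖fderiv ℝ (fun x => ψ x v) u‖ ≤ c₅ * (1 + ‖v‖ ^ 2)) ∧
      (∀ u₁ u₂ v : H, ‖u₁‖ ≤ R → ‖u₂‖ ≤ R →
        ‖fderiv ℝ (fun x => ψ x v) u₁ - fderiv ℝ (fun x => ψ x v) u₂‖ ≤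
          c₆ * ‖u₁ - u₂‖ * ‖v‖ ^ 2) ∧
      (∀ u v : H, ‖u‖ ≤ R → ‖fderiv ℝ (ψ u) v‖ ^ 2 ≤ c₇ * (1 + ‖v‖ ^ 2)) ∧
      (∀ u₁ u₂ v : H, ‖u₁‖ ≤ R → ‖u₂‖ ≤ R →
        ‖fderiv ℝ (ψ u₁) v - fderiv ℝ (ψ u₂) v‖ ≤ c₈ * ‖u₁ - u₂‖ * ‖v‖) ∧
      (∀ u v w : H, ‖u‖ ≤ R →
        ‖fderiv ℝ (fun y => fderiv ℝ (fun x => ψ x y) u) v w‖ ≤ c₉ * ‖v‖ * ‖w‖) ∧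
      (∀ u v w : H, ‖u‖ ≤ R →
        c₁₀ * ‖w‖ ^ 2 ≤ fderiv ℝ (fun y => fderiv ℝ (ψ u) y) v w w))
    -- the regularization parameters, the resolvents J_λ of ∂φ¹ and I_λ of ∂φ²
    (ε lam : ℝ) (hε : 0 < ε) (hlam : 0 < lam)
    (Jl : H →L[ℝ] H) (hJl : ∀ w : H, InSubdiff (phiOne ι a) (Jl w) (lam⁻¹ • (w - Jl w)))
    (Il : H → H) (hIl : ∀ w : H, InSubdiff φ2 (Il w) (lam⁻¹ • (w - Il w)))
    -- u is a global minimizer of W^{ελ} over K₀(u₀)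
    (u u' : ℝ → H) (huH1 : InH1 T u u') (hu0 : u 0 = u₀)
    (hmin : ∀ v v' : ℝ → H, InH1 T v v' → v 0 = u₀ →
      WEDval ψ (MYe (phiOne ι a) lam) (MYe φ2 lam) ε T (fun w => Jl w) u u' ≤
        WEDval ψ (MYe (phiOne ι a) lam) (MYe φ2 lam) ε T (fun w => Jl w) v v')
    :
    (∫ t in Set.Ioc 0 T, ‖u' t‖ ^ 2) ≤
        c₄ * ((MYe (phiOne ι a) lam u₀).toReal + (MYe φ2 lam u₀).toReal) ∧
      c₄ * ((MYe (phiOne ι a) lam u₀).toReal + (MYe φ2 lam u₀).toReal) ≤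
        c₄ * ((phiOne ι a u₀).toReal + (φ2 u₀).toReal) := by
  classical
  haveI : SecondCountableTopology H := UniformSpace.secondCountable_of_separable H
  borelize H
  -- boundedness of t ↦ φλ(u t) on [0,T]
  obtain ⟨C, hC⟩ := (isCompact_Icc.image_of_continuousOn huH1.1).isBounded.subset_closedBall u₀
  have hC' : ∀ t ∈ Set.Icc (0:ℝ) T, ‖u t - u₀‖ ≤ C := fun t ht => by
    have := hC (Set.mem_image_of_mem u ht)
    rwa [Metric.mem_closedBall, dist_eq_norm] at this
  have hBM : ∀ t ∈ Set.Icc (0:ℝ) T, MYe (phiOne ι a) lam (u t) + MYe φ2 lam (u t)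
      ≤ (ENNReal.ofReal (C ^ 2 / (2 * lam)) + phiOne ι a u₀)
        + (ENNReal.ofReal (C ^ 2 / (2 * lam)) + φ2 u₀) := by
    intro t ht
    have hsq : ‖u t - u₀‖ ^ 2 / (2 * lam) ≤ C ^ 2 / (2 * lam) := by
      gcongr
      exact hC' t ht
    exact add_le_add
      (le_trans (Stmt11Aux.MYe_le _ _ _ u₀) (add_le_add_left (ENNReal.ofReal_le_ofReal hsq) _))
      (le_trans (Stmt11Aux.MYe_le _ _ _ u₀) (add_le_add_left (ENNReal.ofReal_le_ofReal hsq) _))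
  have hMne : ((ENNReal.ofReal (C ^ 2 / (2 * lam)) + phiOne ι a u₀)
      + (ENNReal.ofReal (C ^ 2 / (2 * lam)) + φ2 u₀)) ≠ ⊤ :=
    ENNReal.add_ne_top.mpr ⟨ENNReal.add_ne_top.mpr ⟨ENNReal.ofReal_ne_top, hu₀1⟩,
      ENNReal.add_ne_top.mpr ⟨ENNReal.ofReal_ne_top, hu₀2⟩⟩
  have hf₁0 : MYe (phiOne ι a) lam u₀ ≠ ⊤ :=
    ne_top_of_le_ne_top hu₀1 (Stmt11Aux.MYe_le_self _ _ _)
  have hf₂0 : MYe φ2 lam u₀ ≠ ⊤ :=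
    ne_top_of_le_ne_top hu₀2 (Stmt11Aux.MYe_le_self _ _ _)
  -- the core a priori estimate
  have hP : (∫⁻ t in Set.Ioc 0 T, ENNReal.ofReal (ψ (Jl (u t)) (u' t)))
      ≤ MYe (phiOne ι a) lam u₀ + MYe φ2 lam u₀ :=
    Stmt11Aux2.core T ε hT hε (MYe (phiOne ι a) lam) (MYe φ2 lam)
      (Stmt11Aux.MYe_measurable _ _) (Stmt11Aux.MYe_measurable _ _)
      ψ hψC2.continuous hψ0 (fun w => Jl w) Jl.continuous u₀ hf₁0 hf₂0 u u' huH1 hu0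
      _ hMne hBM hmin
  have hB₀ne : MYe (phiOne ι a) lam u₀ + MYe φ2 lam u₀ ≠ ⊤ :=
    ENNReal.add_ne_top.mpr ⟨hf₁0, hf₂0⟩
  constructor
  · -- the first inequality
    have hu'_meas : AEMeasurable u' (volume.restrict (Set.Ioc 0 T)) :=
      huH1.2.1.aestronglyMeasurable.aemeasurable
    have hnorm_meas : AEStronglyMeasurable (fun t => ‖u' t‖ ^ 2)
        (volume.restrict (Set.Ioc 0 T)) :=
      (hu'_meas.norm.pow_const 2).aestronglyMeasurable
    rw [integral_eq_lintegral_of_nonneg_ae (ae_of_all _ fun t => by positivity) hnorm_meas]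
    have hle : (∫⁻ t in Set.Ioc 0 T, ENNReal.ofReal (‖u' t‖ ^ 2))
        ≤ ENNReal.ofReal c₄ * (MYe (phiOne ι a) lam u₀ + MYe φ2 lam u₀) := by
      have h1 : (∫⁻ t in Set.Ioc 0 T, ENNReal.ofReal (‖u' t‖ ^ 2))
          ≤ ∫⁻ t in Set.Ioc 0 T, ENNReal.ofReal c₄ * ENNReal.ofReal (ψ (Jl (u t)) (u' t)) := by
        refine lintegral_mono fun t => ?_
        rw [← ENNReal.ofReal_mul hc₄.le]
        exact ENNReal.ofReal_le_ofReal (hcoer4 (Jl (u t)) (u' t))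
      rw [lintegral_const_mul' _ _ ENNReal.ofReal_ne_top] at h1
      exact le_trans h1 (mul_le_mul_right hP _)
    have hmono := ENNReal.toReal_mono (ENNReal.mul_ne_top ENNReal.ofReal_ne_top hB₀ne) hle
    rwa [ENNReal.toReal_mul, ENNReal.toReal_ofReal hc₄.le,
      ENNReal.toReal_add hf₁0 hf₂0] at hmono
  · -- the second inequality
    refine mul_le_mul_of_nonneg_left (add_le_add ?_ ?_) hc₄.le
    · exact ENNReal.toReal_mono hu₀1 (Stmt11Aux.MYe_le_self _ _ _)
    · exact ENNReal.toReal_mono hu₀2 (Stmt11Aux.MYe_le_self _ _ _)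
end
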